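/- arXiv:1107.3493 — 2 statements merged into one kernel-verified Lean document; each statement's English description precedes it below -/
import Mathlib

section
/- Let a < b be real numbers, let n = 2m be even, and let g_0,…,g_{n+1} be continuous functions on [a,b] such that both (g_0,…,g_n) and (g_0,…,g_{n+1}) are T_+-systems on [a,b]. Let c ∈ ℝ^{n+1} with M_c ≠ ∅, and let μ_max (respectively μ_min) be a measure in M_c maximizing (respectively minimizing) ∫ g_{n+1} dμ over μ ∈ M_c. Then there exist subsets X_max and X_min of [a,b] such that supp μ_max ⊆ X_max, supp μ_min ⊆ X_min, card X_max = card X_min = m+1, b ∈ X_max, and a ∈ X_min. -/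
open MeasureTheory Matrix BigOperators Filter

/-- `(g_0, …, g_k)` is a T₊-system on `[a, b]`: the determinant
`det (g_i(x_j))` is strictly positive whenever `a ≤ x_0 < … < x_k ≤ b`. -/
def IsTPlusSystem {k : ℕ} (a b : ℝ) (g : Fin (k + 1) → ℝ → ℝ) : Prop :=
  ∀ x : Fin (k + 1) → ℝ, StrictMono x → (∀ j, x j ∈ Set.Icc a b) →
    0 < (Matrix.of fun i j => g i (x j)).det

/-- `μ` belongs to the moment set `M_c`: it is a finite nonnegative Borel
measure on `[a, b]` (i.e. vanishing outside `[a, b]`) with `∫ g_i dμ = c_i`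
for all `i`. -/
def MemMc (a b : ℝ) {n : ℕ} (g : Fin (n + 1) → ℝ → ℝ) (c : Fin (n + 1) → ℝ)
    (μ : Measure ℝ) : Prop :=
  IsFiniteMeasure μ ∧ μ (Set.Icc a b)ᶜ = 0 ∧ ∀ i, ∫ x, g i x ∂μ = c i

/-- The support of a Borel measure: the set of points all of whose open
neighborhoods have positive measure. -/
def measSupport (μ : Measure ℝ) : Set ℝ :=
  {x | ∀ U : Set ℝ, IsOpen U → x ∈ U → 0 < μ U}

lemma cramer_kernel (n : ℕ) (B : Matrix (Fin n) (Fin (n+1)) ℝ) (i : Fin n) :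
    ∑ j : Fin (n+1), (-1:ℝ)^(j:ℕ) * (B.submatrix id j.succAbove).det * B i j = 0 := by
  classical
  set C : Matrix (Fin (n+1)) (Fin (n+1)) ℝ := Matrix.of (Fin.cons (B i) B) with hC
  have h0 : C.det = 0 := by
    apply Matrix.det_zero_of_row_eq (i := (0 : Fin (n+1))) (j := i.succ)
    · exact (Fin.succ_ne_zero i).symm
    · funext j
      simp [hC]; rfl
  have h1 := Matrix.det_succ_row_zero C
  rw [h0] at h1
  have h2 : ∀ j : Fin (n+1), C.submatrix Fin.succ j.succAbove = B.submatrix id j.succAbove := by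
    intro j; ext r c; simp [hC]; rfl
  rw [h1.symm] at *
  calc ∑ j : Fin (n+1), (-1:ℝ)^(j:ℕ) * (B.submatrix id j.succAbove).det * B i j
      = ∑ j : Fin (n+1), (-1:ℝ)^(j:ℕ) * C 0 j * (C.submatrix Fin.succ j.succAbove).det := by
        refine Finset.sum_congr rfl fun j _ => ?_
        rw [h2]; simp [hC]; ring_nf; rfl
    _ = C.det := (Matrix.det_succ_row_zero C).symm
    _ = 0 := h0

lemma pairing_det (n : ℕ) (B : Matrix (Fin n) (Fin (n+1)) ℝ) (t : Fin (n+1) → ℝ) :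
    ∑ j : Fin (n+1), (-1:ℝ)^(j:ℕ) * (B.submatrix id j.succAbove).det * t j
      = (-1:ℝ)^n * (Matrix.of (Fin.snoc (B : Fin n → Fin (n+1) → ℝ) t)).det := by
  classical
  set S : Matrix (Fin (n+1)) (Fin (n+1)) ℝ := Matrix.of (Fin.cons t B) with hS
  set T : Matrix (Fin (n+1)) (Fin (n+1)) ℝ := Matrix.of (Fin.snoc (B : Fin n → Fin (n+1) → ℝ) t) with hT
  have hTS : T = S.submatrix (finRotate (n+1)) id := by
    ext r c
    simp only [hT, hS, Matrix.submatrix_apply, id]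
    rw [finRotate_succ_apply]
    refine Fin.lastCases ?_ ?_ r
    · simp
      exact congrFun (Fin.snoc_last (α := fun _ => Fin (n+1) → ℝ) (p := B) t) c
    · intro k
      rw [Fin.coeSucc_eq_succ]
      simp
      exact congrFun (Fin.snoc_castSucc (α := fun _ => Fin (n+1) → ℝ) (p := B) t k) c
  have hsign : (T.det) = (-1:ℝ)^n * S.det := by
    rw [hTS, Matrix.det_permute]
    norm_num [sign_finRotate]
  have hexp : S.det = ∑ j : Fin (n+1), (-1:ℝ)^(j:ℕ) * (B.submatrix id j.succAbove).det * t j := by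
    rw [Matrix.det_succ_row_zero]
    refine Finset.sum_congr rfl fun j _ => ?_
    have h2 : S.submatrix Fin.succ j.succAbove = B.submatrix id j.succAbove := by
      ext r c; simp [hS]; rfl
    rw [h2]; simp [hS]; exact mul_right_comm _ _ _
  rw [← hexp, hsign, ← mul_assoc]
  have : (-1:ℝ)^n * (-1:ℝ)^n = 1 := by
    rw [← pow_add]; exact Even.neg_one_pow ⟨n, rfl⟩
  rw [this, one_mul]




lemma integral_dirac_any (f : ℝ → ℝ) (p : ℝ) :
    ∫ x, f x ∂(Measure.dirac p) = f p := by
  have hae : f =ᵐ[Measure.dirac p] fun _ => f p := by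
    rw [Filter.EventuallyEq, ae_iff]
    refine measure_mono_null (t := ({p} : Set ℝ)ᶜ) (fun x hx h => ?_) ?_
    · simp only [Set.mem_singleton_iff] at h
      exact hx (by rw [h])
    · rw [Measure.dirac_apply' _ (measurableSet_singleton p).compl]
      simp
  rw [integral_congr_ae hae, integral_const]
  simp

lemma integrable_dirac_any (f : ℝ → ℝ) (p : ℝ) : Integrable f (Measure.dirac p) := by
  have hae : f =ᵐ[Measure.dirac p] fun _ => f p := by
    rw [Filter.EventuallyEq, ae_iff]
    refine measure_mono_null (t := ({p} : Set ℝ)ᶜ) (fun x hx h => ?_) ?_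
    · simp only [Set.mem_singleton_iff] at h
      exact hx (by rw [h])
    · rw [Measure.dirac_apply' _ (measurableSet_singleton p).compl]
      simp
  exact (integrable_const (f p)).congr hae.symm

lemma integrable_of_contOn {a b : ℝ} {μ : Measure ℝ} [IsFiniteMeasure μ]
    (hμ : μ (Set.Icc a b)ᶜ = 0) {f : ℝ → ℝ} (hf : ContinuousOn f (Set.Icc a b)) :
    Integrable f μ := by
  have hres : μ.restrict (Set.Icc a b) = μ :=
    Measure.restrict_eq_self_of_ae_mem (by
      rw [Filter.Eventually, mem_ae_iff]
      exact hμ)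
  rw [← hres]
  exact hf.integrableOn_compact isCompact_Icc

lemma measSupport_subset_Icc {a b : ℝ} {μ : Measure ℝ}
    (hμ : μ (Set.Icc a b)ᶜ = 0) : measSupport μ ⊆ Set.Icc a b := by
  intro x hx
  by_contra hxI
  have := hx (Set.Icc a b)ᶜ isClosed_Icc.isOpen_compl hxI
  rw [hμ] at this
  exact lt_irrefl _ this

lemma avg_tendsto {a b : ℝ} {μ : Measure ℝ} [IsFiniteMeasure μ]
    (hμ : μ (Set.Icc a b)ᶜ = 0) {f : ℝ → ℝ} (hf : ContinuousOn f (Set.Icc a b))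
    {s : ℝ} (hs : s ∈ Set.Icc a b) (hsupp : s ∈ measSupport μ)
    {r : ℕ → ℝ} (hr : ∀ k, 0 < r k) (hr0 : Tendsto r atTop (nhds 0)) :
    Tendsto (fun k => (∫ x in Metric.ball s (r k), f x ∂μ) / (μ (Metric.ball s (r k))).toReal)
      atTop (nhds (f s)) := by
  have hint : Integrable f μ := integrable_of_contOn hμ hf
  have haeIcc : ∀ᵐ x ∂μ, x ∈ Set.Icc a b := by
    rw [ae_iff]; exact hμ
  rw [Metric.tendsto_atTop]
  intro ε hε
  have hcont := hf s hs
  rw [ContinuousWithinAt, Metric.tendsto_nhdsWithin_nhds] at hcont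
  obtain ⟨δ, hδ, hδ'⟩ := hcont (ε/2) (by linarith)
  obtain ⟨N, hN⟩ := (Metric.tendsto_atTop.1 hr0) δ hδ
  refine ⟨N, fun k hk => ?_⟩
  set V := Metric.ball s (r k) with hV
  have hVpos : 0 < μ V := hsupp V Metric.isOpen_ball (Metric.mem_ball_self (hr k))
  have hVfin : μ V ≠ ⊤ := measure_ne_top μ V
  have hVreal : 0 < (μ V).toReal := ENNReal.toReal_pos hVpos.ne' hVfin
  have hrk : r k < δ := by
    have := hN k hk
    rw [Real.dist_eq, sub_zero, abs_of_pos (hr k)] at this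
    exact this
  have hbound : ∀ᵐ x ∂μ.restrict V, ‖f x - f s‖ ≤ ε/2 := by
    have h1 : ∀ᵐ x ∂μ.restrict V, x ∈ Set.Icc a b := ae_restrict_of_ae haeIcc
    have h2 : ∀ᵐ x ∂μ.restrict V, x ∈ V := ae_restrict_mem measurableSet_ball
    filter_upwards [h1, h2] with x hx1 hx2
    have hd : dist x s < δ := lt_trans (Metric.mem_ball.1 hx2) hrk
    exact le_of_lt (hδ' hx1 hd)
  have hsub : Integrable (fun x => f x - f s) (μ.restrict V) :=
    (hint.restrict.sub (integrable_const (f s)))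
  have hnormint : ‖∫ x in V, (f x - f s) ∂μ‖ ≤ (ε/2) * ((μ.restrict V) Set.univ).toReal :=
    norm_integral_le_of_norm_le_const hbound
  rw [Measure.restrict_apply_univ] at hnormint
  have hsplit : ∫ x in V, (f x - f s) ∂μ = (∫ x in V, f x ∂μ) - f s * (μ V).toReal := by
    rw [integral_sub hint.restrict (integrable_const (f s)), integral_const,
      measureReal_restrict_apply_univ, smul_eq_mul, measureReal_def]
    ring
  rw [hsplit] at hnormint
  rw [Real.dist_eq]
  have : (∫ x in V, f x ∂μ) / (μ V).toReal - f s
      = ((∫ x in V, f x ∂μ) - f s * (μ V).toReal) / (μ V).toReal := by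
    field_simp
  rw [this, abs_div, abs_of_pos hVreal, div_lt_iff₀ hVreal]
  calc |(∫ x in V, f x ∂μ) - f s * (μ V).toReal| ≤ (ε/2) * (μ V).toReal := hnormint
    _ < ε * (μ V).toReal := by
        have := mul_lt_mul_of_pos_right (by linarith : ε/2 < ε) hVreal
        linarith


set_option maxHeartbeats 3000000 in
lemma core_perturb (a b : ℝ) (m : ℕ)
    (g : Fin (2*m+1) → ℝ → ℝ) (gtop : ℝ → ℝ)
    (hg : ∀ i, ContinuousOn (g i) (Set.Icc a b))
    (hgtop : ContinuousOn gtop (Set.Icc a b))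
    (hT : IsTPlusSystem a b g) (hT' : IsTPlusSystem a b (Fin.snoc g gtop))
    (c : Fin (2*m+1) → ℝ) (μ : Measure ℝ) (hμ : MemMc a b g c μ)
    (u : Fin (2*m+1+1) → ℝ) (hu : StrictMono u) (huI : ∀ j, u j ∈ Set.Icc a b)
    (ρ : ℝ) (hρ : ρ = 1 ∨ ρ = -1)
    (hsupp : ∀ j : Fin (2*m+1+1), ρ * (-1:ℝ)^(j:ℕ) < 0 → u j ∈ measSupport μ) :
    ∃ ν, MemMc a b g c ν ∧ 0 < (-ρ) * ((∫ x, gtop x ∂ν) - ∫ x, gtop x ∂μ) := by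
  classical
  obtain ⟨hfin, hnull, hmom⟩ := hμ
  haveI := hfin
  have hgint : ∀ i, Integrable (g i) μ := fun i => integrable_of_contOn hnull (hg i)
  have htopint : Integrable gtop μ := integrable_of_contOn hnull hgtop
  have hsq : ρ * ρ = 1 := by rcases hρ with h | h <;> rw [h] <;> norm_num
  have hsgn : ∀ N : ℕ, ρ * (-1:ℝ)^N = 1 ∨ ρ * (-1:ℝ)^N = -1 := by
    intro N
    rcases Nat.even_or_odd N with hN | hN <;>
      rcases hρ with h | h <;>
        rw [hN.neg_one_pow, h] <;> norm_num
  set R : Finset (Fin (2*m+1+1)) :=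
    Finset.univ.filter (fun j => ρ * (-1:ℝ)^(j:ℕ) < 0) with hRdef
  have hmemR : ∀ j, j ∈ R ↔ ρ * (-1:ℝ)^(j:ℕ) < 0 := by
    intro j; rw [hRdef, Finset.mem_filter]; simp
  -- gap between points
  set gap : ℝ := Finset.univ.inf' Finset.univ_nonempty
      (fun k : Fin (2*m+1) => u k.succ - u k.castSucc) with hgapdef
  have hgap : 0 < gap := by
    rw [hgapdef, Finset.lt_inf'_iff]
    exact fun k _ => sub_pos.2 (hu (Fin.castSucc_lt_succ (i := k)))
  have hdist : ∀ j j' : Fin (2*m+1+1), j < j' → gap ≤ u j' - u j := by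
    intro j j' hjj
    have hj : (j:ℕ) < 2*m+1 := by
      have h1 : (j:ℕ) < (j':ℕ) := hjj
      have h2 : (j':ℕ) < 2*m+1+1 := j'.isLt
      omega
    set k : Fin (2*m+1) := ⟨(j:ℕ), hj⟩ with hkdef
    have h1 : k.castSucc = j := by
      apply Fin.ext; simp [hkdef]
    have h2 : k.succ ≤ j' := by
      rw [Fin.le_def]
      have : (j:ℕ) < (j':ℕ) := hjj
      simp [hkdef]
      omega
    have h3 : gap ≤ u k.succ - u k.castSucc := Finset.inf'_le _ (Finset.mem_univ k)
    have h4 : u k.succ ≤ u j' := hu.monotone h2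
    rw [h1] at h3
    linarith
  -- radii
  set r : ℕ → ℝ := fun k => gap/4 * (1/((k:ℝ)+1)) with hrdef
  have hrpos : ∀ k, 0 < r k := by
    intro k
    apply mul_pos (by linarith)
    positivity
  have hrlim : Tendsto r atTop (nhds 0) := by
    have := tendsto_one_div_add_atTop_nhds_zero_nat.const_mul (gap/4)
    simpa [hrdef] using this
  have hrle : ∀ k, r k ≤ gap/4 := by
    intro k
    rw [hrdef]
    have h1 : 1/((k:ℝ)+1) ≤ 1 := by
      rw [div_le_one (by positivity)]
      have : (0:ℝ) ≤ (k:ℝ) := Nat.cast_nonneg k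
      linarith
    nlinarith
  set V : ℕ → Fin (2*m+1+1) → Set ℝ := fun k j => Metric.ball (u j) (r k) with hVdef
  have hVdisj : ∀ (k) {j j' : Fin (2*m+1+1)}, j ≠ j' → Disjoint (V k j) (V k j') := by
    intro k j j' hne
    apply Metric.ball_disjoint_ball
    have hd : gap ≤ dist (u j) (u j') := by
      rcases hne.lt_or_gt with h | h
      · have := hdist _ _ h
        rw [dist_comm, Real.dist_eq]
        calc gap ≤ u j' - u j := this
          _ ≤ |u j' - u j| := le_abs_self _
      · have := hdist _ _ h
        rw [Real.dist_eq]
        calc gap ≤ u j - u j' := this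
          _ ≤ |u j - u j'| := le_abs_self _
    have := hrle k
    linarith
  -- column values
  set colf : ℕ → Fin (2*m+1+1) → (ℝ → ℝ) → ℝ := fun k j f =>
    if j ∈ R then (∫ x in V k j, f x ∂μ) / (μ (V k j)).toReal else f (u j) with hcolfdef
  have hcol : ∀ (j) (f : ℝ → ℝ), ContinuousOn f (Set.Icc a b) →
      Tendsto (fun k => colf k j f) atTop (nhds (f (u j))) := by
    intro j f hf
    by_cases hj : j ∈ R
    · simp only [hcolfdef, if_pos hj]
      exact avg_tendsto hnull hf (huI j) (hsupp j ((hmemR j).1 hj)) hrpos hrlim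
    · simp only [hcolfdef, if_neg hj]
      exact tendsto_const_nhds
  -- matrices and minors
  set d : ℕ → Fin (2*m+1+1) → ℝ := fun k (j : Fin (2*m+1+1)) =>
    ((Matrix.of (fun i j' => colf k j' (g i)) :
      Matrix (Fin (2*m+1)) (Fin (2*m+1+1)) ℝ).submatrix id j.succAbove).det with hddef
  set Alim : Matrix (Fin (2*m+1)) (Fin (2*m+1+1)) ℝ := Matrix.of (fun i j => g i (u j)) with hAdef
  have hdApos : ∀ j : Fin (2*m+1+1), 0 < (Alim.submatrix id j.succAbove).det := by
    intro j
    have h := hT (u ∘ j.succAbove) (hu.comp (Fin.strictMono_succAbove j)) (fun k => huI _)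
    have heq : Alim.submatrix id j.succAbove
        = Matrix.of (fun i k => g i ((u ∘ j.succAbove) k)) := rfl
    rw [heq]
    exact h
  have hdlim : ∀ j : Fin (2*m+1+1), Tendsto (fun k => d k j) atTop (nhds ((Alim.submatrix id j.succAbove).det)) := by
    intro j
    have hmat : Tendsto (fun k => ((Matrix.of (fun i j' => colf k j' (g i)) :
        Matrix (Fin (2*m+1)) (Fin (2*m+1+1)) ℝ).submatrix id j.succAbove)) atTop
        (nhds (Alim.submatrix id j.succAbove)) := by
      apply tendsto_pi_nhds.2
      intro i
      rw [tendsto_pi_nhds]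
      intro c'
      exact hcol (j.succAbove c') (g i) (hg i)
    exact ((continuous_id.matrix_det).tendsto _).comp hmat
  set Tmat : Matrix (Fin (2*m+1+1)) (Fin (2*m+1+1)) ℝ :=
    Matrix.of (fun i j => (Fin.snoc g gtop : Fin (2*m+1+1) → ℝ → ℝ) i (u j)) with hTmatdef
  have hTdet : 0 < Tmat.det := hT' u hu huI
  set P : ℕ → ℝ := fun k => ∑ j : Fin (2*m+1+1), ρ * (-1:ℝ)^(j:ℕ) * d k j * colf k j gtop with hPdef
  have hL : Tendsto P atTop (nhds (∑ j : Fin (2*m+1+1), ρ * (-1:ℝ)^(j:ℕ)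
      * (Alim.submatrix id j.succAbove).det * gtop (u j))) := by
    apply tendsto_finset_sum
    intro j _
    exact (((hdlim j).const_mul _).mul (hcol j gtop hgtop))
  have hsnoc : (Matrix.of (Fin.snoc (Alim : Fin (2*m+1) → Fin (2*m+1+1) → ℝ) (fun j => gtop (u j)))) = Tmat := by
    ext i j
    refine Fin.lastCases ?_ ?_ i
    · simp [hTmatdef]
      exact congrFun (Fin.snoc_last (α := fun _ => Fin (2*m+1+1) → ℝ) (p := Alim) (fun j => gtop (u j))) j
    · intro i'
      simp [hAdef, hTmatdef]
      exact congrFun (Fin.snoc_castSucc (α := fun _ => Fin (2*m+1+1) → ℝ) (p := Alim) (fun j => gtop (u j)) i') j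
  have hLval : (∑ j : Fin (2*m+1+1), ρ * (-1:ℝ)^(j:ℕ) * (Alim.submatrix id j.succAbove).det * gtop (u j))
      = -ρ * Tmat.det := by
    have hp := pairing_det (2*m+1) Alim (fun j => gtop (u j))
    rw [hsnoc] at hp
    have hodd : ((-1:ℝ))^(2*m+1) = -1 := Odd.neg_one_pow ⟨m, by ring⟩
    rw [hodd] at hp
    have hp' : (∑ j : Fin (2*m+1+1), (-1:ℝ)^(j:ℕ)
        * (Alim.submatrix id j.succAbove).det * gtop (u j)) = -1 * Tmat.det := by
      simpa using hp
    calc (∑ j : Fin (2*m+1+1), ρ * (-1:ℝ)^(j:ℕ) * (Alim.submatrix id j.succAbove).det * gtop (u j))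
        = ρ * ∑ j : Fin (2*m+1+1), (-1:ℝ)^(j:ℕ) * (Alim.submatrix id j.succAbove).det * gtop (u j) := by
          rw [Finset.mul_sum]
          exact Finset.sum_congr rfl fun j _ => by ring
      _ = ρ * (-1 * Tmat.det) := by rw [hp']
      _ = -ρ * Tmat.det := by ring
  have hQ : Tendsto (fun k => (-ρ) * P k) atTop (nhds (Tmat.det)) := by
    have h := hL.const_mul (-ρ)
    rw [hLval] at h
    have : (-ρ) * (-ρ * Tmat.det) = Tmat.det := by
      have : (-ρ) * (-ρ * Tmat.det) = (ρ * ρ) * Tmat.det := by ring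
      rw [this, hsq, one_mul]
    rwa [this] at h
  have hev1 : ∀ᶠ k in atTop, ∀ j, 0 < d k j :=
    eventually_all.2 fun j => (hdlim j).eventually (eventually_gt_nhds (hdApos j))
  have hev2 : ∀ᶠ k in atTop, 0 < (-ρ) * P k :=
    hQ.eventually (eventually_gt_nhds hTdet)
  obtain ⟨K, hK1, hK2⟩ := (hev1.and hev2).exists
  set w : Fin (2*m+1+1) → ℝ := fun j => ρ * (-1:ℝ)^(j:ℕ) * d K j with hwdef
  have hwneg : ∀ j ∈ R, w j < 0 := fun j hj =>
    mul_neg_of_neg_of_pos ((hmemR j).1 hj) (hK1 j)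
  have hwpos : ∀ j, j ∉ R → 0 < w j := by
    intro j hj
    have h1 : ¬ (ρ * (-1:ℝ)^(j:ℕ) < 0) := fun h => hj ((hmemR j).2 h)
    have h2 : 0 < ρ * (-1:ℝ)^(j:ℕ) := by
      rcases hsgn (j:ℕ) with h | h
      · rw [h]; norm_num
      · exfalso; apply h1; rw [h]; norm_num
    exact mul_pos h2 (hK1 j)
  have hker : ∀ i, ∑ j : Fin (2*m+1+1), w j * colf K j (g i) = 0 := by
    intro i
    have h0 := cramer_kernel (2*m+1) (Matrix.of (fun i' j' => colf K j' (g i'))) i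
    have h1 : ∑ j : Fin (2*m+1+1), w j * colf K j (g i)
        = ρ * ∑ j : Fin (2*m+1+1), (-1:ℝ)^(j:ℕ)
          * (((Matrix.of (fun i' j' => colf K j' (g i'))) :
              Matrix (Fin (2*m+1)) (Fin (2*m+1+1)) ℝ).submatrix id j.succAbove).det
          * (Matrix.of (fun i' j' => colf K j' (g i'))) i j := by
      rw [Finset.mul_sum]
      refine Finset.sum_congr rfl fun j _ => ?_
      simp only [hwdef, hddef, Matrix.of_apply]
      ring
    rw [h1, h0, mul_zero]
  have hpairK : ∑ j : Fin (2*m+1+1), w j * colf K j gtop = P K := rfl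
  have hVposR : ∀ j ∈ R, 0 < (μ (V K j)).toReal := by
    intro j hj
    have h1 : 0 < μ (V K j) := (hsupp j ((hmemR j).1 hj)) (V K j) Metric.isOpen_ball
      (Metric.mem_ball_self (hrpos K))
    exact ENNReal.toReal_pos h1.ne' (measure_ne_top μ _)
  set ε : ℝ := Finset.univ.inf' Finset.univ_nonempty
    (fun j => if j ∈ R then (μ (V K j)).toReal / (-(w j)) else 1) with hεdef
  have hεpos : 0 < ε := by
    rw [hεdef, Finset.lt_inf'_iff]
    intro j _
    by_cases hj : j ∈ R
    · rw [if_pos hj]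
      exact div_pos (hVposR j hj) (neg_pos.2 (hwneg j hj))
    · rw [if_neg hj]; norm_num
  have hγle : ∀ j ∈ R, ε * (-(w j)) ≤ (μ (V K j)).toReal := by
    intro j hj
    have h1 : ε ≤ (μ (V K j)).toReal / (-(w j)) := by
      have h2 := Finset.inf'_le (s := (Finset.univ : Finset (Fin (2*m+1+1))))
        (fun j => if j ∈ R then (μ (V K j)).toReal / (-(w j)) else 1) (Finset.mem_univ j)
      rw [if_pos hj] at h2
      rw [hεdef]
      exact h2
    exact (le_div_iff₀ (neg_pos.2 (hwneg j hj))).1 h1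
  set γ : Fin (2*m+1+1) → ℝ := fun j => ε * (-(w j)) / (μ (V K j)).toReal with hγdef
  have hγmem : ∀ j ∈ R, 0 ≤ γ j ∧ γ j ≤ 1 := by
    intro j hj
    constructor
    · apply div_nonneg _ (hVposR j hj).le
      have := hwneg j hj
      nlinarith [hεpos.le]
    · rw [hγdef]
      simp only []
      rw [div_le_one (hVposR j hj)]
      exact hγle j hj
  set U : Set ℝ := ⋃ j ∈ R, V K j with hUdef
  have hUmeas : MeasurableSet U :=
    MeasurableSet.biUnion R.countable_toSet (fun j _ => measurableSet_ball)
  set ν : Measure ℝ := μ.restrict Uᶜ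
      + ∑ j ∈ R, ENNReal.ofReal (1 - γ j) • μ.restrict (V K j)
      + ∑ j ∈ Rᶜ, ENNReal.ofReal (ε * w j) • Measure.dirac (u j) with hνdef
  have key : ∀ f : ℝ → ℝ, Integrable f μ →
      ∫ x, f x ∂ν = (∫ x, f x ∂μ) + ε * ∑ j : Fin (2*m+1+1), w j * colf K j f := by
    intro f hf
    have hint1 : Integrable f (μ.restrict Uᶜ) := hf.restrict
    have hintS1 : ∀ j ∈ R, Integrable f (ENNReal.ofReal (1 - γ j) • μ.restrict (V K j)) :=
      fun j _ => hf.restrict.smul_measure ENNReal.ofReal_ne_top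
    have hintS2 : ∀ j ∈ Rᶜ, Integrable f (ENNReal.ofReal (ε * w j) • Measure.dirac (u j)) :=
      fun j _ => (integrable_dirac_any f (u j)).smul_measure ENNReal.ofReal_ne_top
    rw [hνdef]
    rw [integral_add_measure (hint1.add_measure (integrable_finset_sum_measure.2 hintS1))
      (integrable_finset_sum_measure.2 hintS2),
      integral_add_measure hint1 (integrable_finset_sum_measure.2 hintS1),
      integral_finset_sum_measure hintS1, integral_finset_sum_measure hintS2]
    have e1 : ∀ j ∈ R, ∫ x, f x ∂(ENNReal.ofReal (1 - γ j) • μ.restrict (V K j))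
        = (1 - γ j) * ∫ x in V K j, f x ∂μ := by
      intro j hj
      rw [integral_smul_measure, ENNReal.toReal_ofReal (sub_nonneg.2 (hγmem j hj).2),
        smul_eq_mul]
    have e2 : ∀ j ∈ Rᶜ, ∫ x, f x ∂(ENNReal.ofReal (ε * w j) • Measure.dirac (u j))
        = ε * w j * f (u j) := by
      intro j hj
      rw [integral_smul_measure, integral_dirac_any, ENNReal.toReal_ofReal
        (mul_nonneg hεpos.le (hwpos j (Finset.mem_compl.1 hj)).le), smul_eq_mul]
    have hdecomp : ∫ x in Uᶜ, f x ∂μ = (∫ x, f x ∂μ) - ∑ j ∈ R, ∫ x in V K j, f x ∂μ := by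
      have h1 := integral_add_compl hUmeas hf
      have h2 : ∫ x in U, f x ∂μ = ∑ j ∈ R, ∫ x in V K j, f x ∂μ := by
        rw [hUdef]
        exact integral_biUnion_finset R (fun j _ => measurableSet_ball)
          (fun j _ j' _ hne => hVdisj K hne) (fun j _ => hf.integrableOn)
      linarith
    rw [Finset.sum_congr rfl e1, Finset.sum_congr rfl e2, hdecomp]
    have hsplitsum : ∑ j : Fin (2*m+1+1), w j * colf K j f
        = (∑ j ∈ R, w j * ((∫ x in V K j, f x ∂μ) / (μ (V K j)).toReal))
          + ∑ j ∈ Rᶜ, w j * f (u j) := by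
      rw [← Finset.sum_add_sum_compl R (fun j => w j * colf K j f)]
      congr 1
      · refine Finset.sum_congr rfl fun j hj => ?_
        rw [hcolfdef]
        simp only [if_pos hj]
      · refine Finset.sum_congr rfl fun j hj => ?_
        rw [hcolfdef]
        simp only [if_neg (Finset.mem_compl.1 hj)]
    rw [hsplitsum, mul_add, Finset.mul_sum, Finset.mul_sum]
    have hAterm : ∀ j ∈ R, (1 - γ j) * ∫ x in V K j, f x ∂μ
        = (∫ x in V K j, f x ∂μ)
          + ε * (w j * ((∫ x in V K j, f x ∂μ) / (μ (V K j)).toReal)) := by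
      intro j hj
      rw [hγdef]
      simp only []
      ring
    rw [Finset.sum_congr rfl hAterm, Finset.sum_add_distrib]
    have hBterm : ∀ j ∈ Rᶜ, ε * w j * f (u j) = ε * (w j * f (u j)) := fun j _ => by ring
    rw [Finset.sum_congr rfl hBterm]
    ring
  have hresnull : ∀ s : Set ℝ, μ.restrict s (Set.Icc a b)ᶜ = 0 :=
    fun s => le_antisymm (le_trans (Measure.restrict_apply_le _ _) hnull.le) zero_le
  have hνnull : ν (Set.Icc a b)ᶜ = 0 := by
    rw [hνdef, Measure.add_apply, Measure.add_apply, Measure.finset_sum_apply,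
      Measure.finset_sum_apply]
    have h2 : ∀ j ∈ R, (ENNReal.ofReal (1 - γ j) • μ.restrict (V K j)) (Set.Icc a b)ᶜ = 0 := by
      intro j _
      rw [Measure.smul_apply, smul_eq_mul, hresnull, mul_zero]
    have h3 : ∀ j ∈ Rᶜ, (ENNReal.ofReal (ε * w j) • Measure.dirac (u j)) (Set.Icc a b)ᶜ = 0 := by
      intro j _
      rw [Measure.smul_apply, smul_eq_mul]
      have hd : Measure.dirac (u j) (Set.Icc a b)ᶜ = 0 := by
        rw [Measure.dirac_apply' _ measurableSet_Icc.compl]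
        simp [huI j]
      rw [hd, mul_zero]
    rw [hresnull, Finset.sum_eq_zero h2, Finset.sum_eq_zero h3]
    simp
  have hνfin : IsFiniteMeasure ν := by
    constructor
    rw [hνdef, Measure.add_apply, Measure.add_apply, Measure.finset_sum_apply,
      Measure.finset_sum_apply]
    have h1 : μ.restrict Uᶜ Set.univ < ⊤ :=
      lt_of_le_of_lt (Measure.restrict_apply_le _ _) (measure_lt_top μ _)
    have h2 : ∀ j ∈ R, (ENNReal.ofReal (1 - γ j) • μ.restrict (V K j)) Set.univ < ⊤ := by
      intro j _
      rw [Measure.smul_apply, smul_eq_mul]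
      exact ENNReal.mul_lt_top ENNReal.ofReal_lt_top
        (lt_of_le_of_lt (Measure.restrict_apply_le _ _) (measure_lt_top μ _))
    have h3 : ∀ j ∈ Rᶜ, (ENNReal.ofReal (ε * w j) • Measure.dirac (u j)) Set.univ < ⊤ := by
      intro j _
      rw [Measure.smul_apply, smul_eq_mul]
      refine ENNReal.mul_lt_top ENNReal.ofReal_lt_top ?_
      simp
    exact ENNReal.add_lt_top.2 ⟨ENNReal.add_lt_top.2 ⟨h1, ENNReal.sum_lt_top.2 h2⟩,
      ENNReal.sum_lt_top.2 h3⟩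
  refine ⟨ν, ⟨hνfin, hνnull, ?_⟩, ?_⟩
  · intro i
    rw [key (g i) (hgint i), hker i, mul_zero, add_zero]
    exact hmom i
  · rw [key gtop htopint, hpairK]
    have hfinal : (-ρ) * ((∫ x, gtop x ∂μ) + ε * P K - ∫ x, gtop x ∂μ)
        = ε * ((-ρ) * P K) := by ring
    rw [hfinal]
    exact mul_pos hεpos hK2



set_option maxHeartbeats 1000000 in
lemma claim_max (a b : ℝ) (hab : a < b) (m : ℕ)
    (g : Fin (2*m+1) → ℝ → ℝ) (gtop : ℝ → ℝ)
    (hg : ∀ i, ContinuousOn (g i) (Set.Icc a b))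
    (hgtop : ContinuousOn gtop (Set.Icc a b))
    (hT : IsTPlusSystem a b g) (hT' : IsTPlusSystem a b (Fin.snoc g gtop))
    (c : Fin (2*m+1) → ℝ) (μmax : Measure ℝ) (hμmax : MemMc a b g c μmax)
    (hmax : ∀ μ : Measure ℝ, MemMc a b g c μ → ∫ x, gtop x ∂μ ≤ ∫ x, gtop x ∂μmax) :
    ∀ F : Finset ℝ, ↑F ⊆ measSupport μmax ∩ Set.Ico a b → F.card ≠ m+1 := by
  classical
  intro F hFsub hFcard
  set σ := F.orderIsoOfFin hFcard with hσ
  set s' : ℕ → ℝ := fun k => if h : k < m+1 then (σ ⟨k, h⟩ : ℝ) else 0 with hs'def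
  have hs'mono : ∀ k k', k' < m+1 → k < k' → s' k < s' k' := by
    intro k k' hk' hkk
    rw [hs'def]
    simp only [dif_pos (lt_trans hkk hk'), dif_pos hk']
    exact Subtype.coe_lt_coe.2 (σ.lt_iff_lt.2 (Fin.mk_lt_mk.2 hkk))
  have hs'mem : ∀ k, k < m+1 → s' k ∈ measSupport μmax ∩ Set.Ico a b := by
    intro k h
    rw [hs'def]
    simp only [dif_pos h]
    exact hFsub (Finset.mem_coe.2 (σ ⟨k, h⟩).2)
  -- interlacing points
  set u : Fin (2*m+1+1) → ℝ := fun j =>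
    if (j:ℕ) % 2 = 0 then s' ((j:ℕ)/2)
    else if (j:ℕ) = 2*m+1 then b else (s' ((j:ℕ)/2) + s' ((j:ℕ)/2+1))/2 with hudef
  have hueval : ∀ j : Fin (2*m+1+1),
      ((j:ℕ) % 2 = 0 → u j = s' ((j:ℕ)/2)) ∧
      ((j:ℕ) % 2 ≠ 0 → (j:ℕ) = 2*m+1 → u j = b) ∧
      ((j:ℕ) % 2 ≠ 0 → (j:ℕ) ≠ 2*m+1 → u j = (s' ((j:ℕ)/2) + s' ((j:ℕ)/2+1))/2) := by
    intro j
    refine ⟨fun h => ?_, fun h h' => ?_, fun h h' => ?_⟩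
    · rw [hudef]; simp only [if_pos h]
    · rw [hudef]; simp only [if_neg h, if_pos h']
    · rw [hudef]; simp only [if_neg h, if_neg h']
  have hu : StrictMono u := by
    rw [Fin.strictMono_iff_lt_succ]
    intro i
    have hiv : (i:ℕ) < 2*m+1 := i.isLt
    have hc : ((i.castSucc : Fin (2*m+1+1)):ℕ) = (i:ℕ) := rfl
    have hsv : ((i.succ : Fin (2*m+1+1)):ℕ) = (i:ℕ)+1 := rfl
    by_cases he : (i:ℕ) % 2 = 0
    · have h1 : u i.castSucc = s' ((i:ℕ)/2) := by
        rw [(hueval i.castSucc).1]; rw [hc]; rw [hc]; exact he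
      by_cases hl : (i:ℕ)+1 = 2*m+1
      · have h2 : u i.succ = b := by
          refine (hueval i.succ).2.1 ?_ ?_ <;> rw [hsv] <;> omega
        rw [h1, h2]
        exact (hs'mem _ (by omega)).2.2
      · have h2 : u i.succ = (s' (((i:ℕ)+1)/2) + s' (((i:ℕ)+1)/2+1))/2 := by
          refine (hueval i.succ).2.2 ?_ ?_ <;> rw [hsv] <;> omega
        have hdiv : ((i:ℕ)+1)/2 = (i:ℕ)/2 := by omega
        rw [h1, h2, hdiv]
        have := hs'mono ((i:ℕ)/2) ((i:ℕ)/2+1) (by omega) (by omega)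
        linarith
    · have h1 : u i.castSucc = (s' ((i:ℕ)/2) + s' ((i:ℕ)/2+1))/2 := by
        refine (hueval i.castSucc).2.2 ?_ ?_ <;> rw [hc] <;> omega
      have h2 : u i.succ = s' (((i:ℕ)+1)/2) := by
        rw [(hueval i.succ).1] <;> rw [hsv] <;> omega
      have hdiv : ((i:ℕ)+1)/2 = (i:ℕ)/2+1 := by omega
      rw [h1, h2, hdiv]
      have := hs'mono ((i:ℕ)/2) ((i:ℕ)/2+1) (by omega) (by omega)
      linarith
  have huI : ∀ j, u j ∈ Set.Icc a b := by
    intro j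
    have hjv : (j:ℕ) < 2*m+1+1 := j.isLt
    by_cases he : (j:ℕ) % 2 = 0
    · rw [(hueval j).1 he]
      have := (hs'mem ((j:ℕ)/2) (by omega)).2
      exact ⟨this.1, this.2.le⟩
    · by_cases hl : (j:ℕ) = 2*m+1
      · rw [(hueval j).2.1 he hl]
        exact ⟨hab.le, le_refl b⟩
      · rw [(hueval j).2.2 he hl]
        have h1 := (hs'mem ((j:ℕ)/2) (by omega)).2
        have h2 := (hs'mem ((j:ℕ)/2+1) (by omega)).2
        constructor
        · have := h1.1; have := h2.1; linarith
        · have := h1.2; have := h2.2; linarith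
  have hsupp' : ∀ j : Fin (2*m+1+1), (-1:ℝ) * (-1:ℝ)^((j:ℕ)) < 0 → u j ∈ measSupport μmax := by
    intro j hj
    have he : (j:ℕ) % 2 = 0 := by
      rcases Nat.even_or_odd (j:ℕ) with h | h
      · exact Nat.even_iff.1 h
      · exfalso
        rw [h.neg_one_pow] at hj
        norm_num at hj
    rw [(hueval j).1 he]
    exact (hs'mem ((j:ℕ)/2) (by have := j.isLt; omega)).1
  obtain ⟨ν, hν, hq⟩ := core_perturb a b m g gtop hg hgtop hT hT' c μmax hμmax u hu huI
    (-1) (Or.inr rfl) hsupp'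
  have h1 := hmax ν hν
  have h2 : 0 < (∫ x, gtop x ∂ν) - ∫ x, gtop x ∂μmax := by
    have : -(-1:ℝ) * ((∫ x, gtop x ∂ν) - ∫ x, gtop x ∂μmax)
        = (∫ x, gtop x ∂ν) - ∫ x, gtop x ∂μmax := by ring
    rwa [this] at hq
  linarith

set_option maxHeartbeats 1000000 in
lemma claim_min (a b : ℝ) (hab : a < b) (m : ℕ)
    (g : Fin (2*m+1) → ℝ → ℝ) (gtop : ℝ → ℝ)
    (hg : ∀ i, ContinuousOn (g i) (Set.Icc a b))
    (hgtop : ContinuousOn gtop (Set.Icc a b))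
    (hT : IsTPlusSystem a b g) (hT' : IsTPlusSystem a b (Fin.snoc g gtop))
    (c : Fin (2*m+1) → ℝ) (μmin : Measure ℝ) (hμmin : MemMc a b g c μmin)
    (hmin : ∀ μ : Measure ℝ, MemMc a b g c μ → ∫ x, gtop x ∂μmin ≤ ∫ x, gtop x ∂μ) :
    ∀ F : Finset ℝ, ↑F ⊆ measSupport μmin ∩ Set.Ioc a b → F.card ≠ m+1 := by
  classical
  intro F hFsub hFcard
  set σ := F.orderIsoOfFin hFcard with hσ
  set s' : ℕ → ℝ := fun k => if h : k < m+1 then (σ ⟨k, h⟩ : ℝ) else 0 with hs'def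
  have hs'mono : ∀ k k', k' < m+1 → k < k' → s' k < s' k' := by
    intro k k' hk' hkk
    rw [hs'def]
    simp only [dif_pos (lt_trans hkk hk'), dif_pos hk']
    exact Subtype.coe_lt_coe.2 (σ.lt_iff_lt.2 (Fin.mk_lt_mk.2 hkk))
  have hs'mem : ∀ k, k < m+1 → s' k ∈ measSupport μmin ∩ Set.Ioc a b := by
    intro k h
    rw [hs'def]
    simp only [dif_pos h]
    exact hFsub (Finset.mem_coe.2 (σ ⟨k, h⟩).2)
  set u : Fin (2*m+1+1) → ℝ := fun j =>
    if (j:ℕ) % 2 = 1 then s' ((j:ℕ)/2)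
    else if (j:ℕ) = 0 then a else (s' ((j:ℕ)/2 - 1) + s' ((j:ℕ)/2))/2 with hudef
  have hueval : ∀ j : Fin (2*m+1+1),
      ((j:ℕ) % 2 = 1 → u j = s' ((j:ℕ)/2)) ∧
      ((j:ℕ) % 2 ≠ 1 → (j:ℕ) = 0 → u j = a) ∧
      ((j:ℕ) % 2 ≠ 1 → (j:ℕ) ≠ 0 → u j = (s' ((j:ℕ)/2 - 1) + s' ((j:ℕ)/2))/2) := by
    intro j
    refine ⟨fun h => ?_, fun h h' => ?_, fun h h' => ?_⟩
    · rw [hudef]; simp only [if_pos h]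
    · rw [hudef]; simp only [if_neg h, if_pos h']
    · rw [hudef]; simp only [if_neg h, if_neg h']
  have hu : StrictMono u := by
    rw [Fin.strictMono_iff_lt_succ]
    intro i
    have hiv : (i:ℕ) < 2*m+1 := i.isLt
    have hc : ((i.castSucc : Fin (2*m+1+1)):ℕ) = (i:ℕ) := rfl
    have hsv : ((i.succ : Fin (2*m+1+1)):ℕ) = (i:ℕ)+1 := rfl
    by_cases he : (i:ℕ) % 2 = 1
    · have h1 : u i.castSucc = s' ((i:ℕ)/2) := by
        rw [(hueval i.castSucc).1]; rw [hc]; rw [hc]; exact he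
      have h2 : u i.succ = (s' (((i:ℕ)+1)/2 - 1) + s' (((i:ℕ)+1)/2))/2 := by
        refine (hueval i.succ).2.2 ?_ ?_ <;> rw [hsv] <;> omega
      have hdiv : ((i:ℕ)+1)/2 = (i:ℕ)/2 + 1 := by omega
      rw [h1, h2, hdiv]
      have hmid : ((i:ℕ)/2 + 1) - 1 = (i:ℕ)/2 := by omega
      rw [hmid]
      have := hs'mono ((i:ℕ)/2) ((i:ℕ)/2+1) (by omega) (by omega)
      linarith
    · by_cases h0 : (i:ℕ) = 0
      · have h1 : u i.castSucc = a := by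
          refine (hueval i.castSucc).2.1 ?_ ?_ <;> rw [hc] <;> omega
        have h2 : u i.succ = s' (((i:ℕ)+1)/2) := by
          rw [(hueval i.succ).1] <;> rw [hsv] <;> omega
        rw [h1, h2]
        exact (hs'mem _ (by omega)).2.1
      · have h1 : u i.castSucc = (s' ((i:ℕ)/2 - 1) + s' ((i:ℕ)/2))/2 := by
          refine (hueval i.castSucc).2.2 ?_ ?_ <;> rw [hc] <;> omega
        have h2 : u i.succ = s' (((i:ℕ)+1)/2) := by
          rw [(hueval i.succ).1] <;> rw [hsv] <;> omega
        have hdiv : ((i:ℕ)+1)/2 = (i:ℕ)/2 := by omega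
        rw [h1, h2, hdiv]
        have := hs'mono ((i:ℕ)/2 - 1) ((i:ℕ)/2) (by omega) (by omega)
        linarith
  have huI : ∀ j, u j ∈ Set.Icc a b := by
    intro j
    have hjv : (j:ℕ) < 2*m+1+1 := j.isLt
    by_cases he : (j:ℕ) % 2 = 1
    · rw [(hueval j).1 he]
      have := (hs'mem ((j:ℕ)/2) (by omega)).2
      exact ⟨this.1.le, this.2⟩
    · by_cases h0 : (j:ℕ) = 0
      · rw [(hueval j).2.1 he h0]
        exact ⟨le_refl a, hab.le⟩
      · rw [(hueval j).2.2 he h0]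
        have h1 := (hs'mem ((j:ℕ)/2 - 1) (by omega)).2
        have h2 := (hs'mem ((j:ℕ)/2) (by omega)).2
        constructor
        · have := h1.1; have := h2.1; linarith
        · have := h1.2; have := h2.2; linarith
  have hsupp' : ∀ j : Fin (2*m+1+1), (1:ℝ) * (-1:ℝ)^((j:ℕ)) < 0 → u j ∈ measSupport μmin := by
    intro j hj
    have he : (j:ℕ) % 2 = 1 := by
      rcases Nat.even_or_odd (j:ℕ) with h | h
      · exfalso
        rw [h.neg_one_pow] at hj
        norm_num at hj
      · exact Nat.odd_iff.1 h
    rw [(hueval j).1 he]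
    exact (hs'mem ((j:ℕ)/2) (by have := j.isLt; omega)).1
  obtain ⟨ν, hν, hq⟩ := core_perturb a b m g gtop hg hgtop hT hT' c μmin hμmin u hu huI
    1 (Or.inl rfl) hsupp'
  have h1 := hmin ν hν
  have h2 : (∫ x, gtop x ∂ν) < ∫ x, gtop x ∂μmin := by nlinarith
  linarith

lemma pad_finset (a b : ℝ) (hab : a < b) (W : Finset ℝ) (hW : ↑W ⊆ Set.Icc a b)
    (n : ℕ) (hcard : W.card ≤ n) :
    ∃ X : Finset ℝ, W ⊆ X ∧ ↑X ⊆ Set.Icc a b ∧ X.card = n := by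
  classical
  have hinf : (Set.Icc a b \ ↑W).Infinite :=
    (Set.infinite_coe_iff.1 (Set.Icc.infinite hab)).diff W.finite_toSet
  obtain ⟨P, hPsub, hPcard⟩ := hinf.exists_subset_card_eq (n - W.card)
  refine ⟨W ∪ P, Finset.subset_union_left, ?_, ?_⟩
  · intro x hx
    rcases Finset.mem_coe.1 hx with hx'
    rcases Finset.mem_union.1 hx' with h | h
    · exact hW (Finset.mem_coe.2 h)
    · exact (hPsub (Finset.mem_coe.2 h)).1
  · have hdisj : Disjoint W P := by
      rw [Finset.disjoint_right]
      intro x hxP hxW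
      exact (hPsub (Finset.mem_coe.2 hxP)).2 (Finset.mem_coe.2 hxW)
    rw [Finset.card_union_of_disjoint hdisj, hPcard]
    omega

lemma small_of_no_big (S : Set ℝ) (m : ℕ)
    (h : ∀ F : Finset ℝ, ↑F ⊆ S → F.card ≠ m+1) :
    ∃ W : Finset ℝ, S ⊆ ↑W ∧ ↑W ⊆ S ∧ W.card ≤ m := by
  classical
  have hfin : S.Finite := by
    by_contra hinf
    obtain ⟨F, h1, h2⟩ := Set.Infinite.exists_subset_card_eq hinf (m+1)
    exact h F h1 h2
  refine ⟨hfin.toFinset, ?_, ?_, ?_⟩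
  · intro x hx
    rw [Finset.mem_coe, Set.Finite.mem_toFinset]
    exact hx
  · intro x hx
    rw [Finset.mem_coe, Set.Finite.mem_toFinset] at hx
    exact hx
  · by_contra hc
    push_neg at hc
    obtain ⟨F, hFsub, hFcard⟩ := Finset.exists_subset_card_eq (Nat.succ_le_of_lt hc)
    refine h F ?_ hFcard
    intro x hx
    rw [Finset.mem_coe] at hx
    have := hFsub hx
    rw [Set.Finite.mem_toFinset] at this
    exact this

/-- The even case `n = 2m` of the localization of the extremal measures: the
supports of the maximizer and the minimizer of `∫ g_{n+1} dμ` over `M_c` are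
contained in sets `X_max ∋ b` and `X_min ∋ a` of cardinality `m + 1`. -/
theorem tplus_extremal_support_even (a b : ℝ) (hab : a < b) (m : ℕ)
    (g : Fin (2 * m + 1) → ℝ → ℝ) (gtop : ℝ → ℝ)
    (hg : ∀ i, ContinuousOn (g i) (Set.Icc a b))
    (hgtop : ContinuousOn gtop (Set.Icc a b))
    (hT : IsTPlusSystem a b g)
    (hT' : IsTPlusSystem a b (Fin.snoc g gtop))
    (c : Fin (2 * m + 1) → ℝ)
    (μmax μmin : Measure ℝ)
    (hμmax : MemMc a b g c μmax) (hμmin : MemMc a b g c μmin)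
    (hmax : ∀ μ : Measure ℝ, MemMc a b g c μ → ∫ x, gtop x ∂μ ≤ ∫ x, gtop x ∂μmax)
    (hmin : ∀ μ : Measure ℝ, MemMc a b g c μ → ∫ x, gtop x ∂μmin ≤ ∫ x, gtop x ∂μ) :
    ∃ Xmax Xmin : Finset ℝ,
      ↑Xmax ⊆ Set.Icc a b ∧ ↑Xmin ⊆ Set.Icc a b ∧
      measSupport μmax ⊆ ↑Xmax ∧ measSupport μmin ⊆ ↑Xmin ∧
      Xmax.card = m + 1 ∧ Xmin.card = m + 1 ∧ b ∈ Xmax ∧ a ∈ Xmin := by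
  classical
  obtain ⟨Wmax, hWmax1, hWmax2, hWmax3⟩ := small_of_no_big
    (measSupport μmax ∩ Set.Ico a b) m
    (claim_max a b hab m g gtop hg hgtop hT hT' c μmax hμmax hmax)
  obtain ⟨Wmin, hWmin1, hWmin2, hWmin3⟩ := small_of_no_big
    (measSupport μmin ∩ Set.Ioc a b) m
    (claim_min a b hab m g gtop hg hgtop hT hT' c μmin hμmin hmin)
  have hsubIccmax : ↑(insert b Wmax) ⊆ Set.Icc a b := by
    intro x hx
    rcases Finset.mem_insert.1 (Finset.mem_coe.1 hx) with h | h
    · rw [h]; exact ⟨hab.le, le_refl b⟩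
    · have := (hWmax2 (Finset.mem_coe.2 h)).2
      exact ⟨this.1, this.2.le⟩
  have hsubIccmin : ↑(insert a Wmin) ⊆ Set.Icc a b := by
    intro x hx
    rcases Finset.mem_insert.1 (Finset.mem_coe.1 hx) with h | h
    · rw [h]; exact ⟨le_refl a, hab.le⟩
    · have := (hWmin2 (Finset.mem_coe.2 h)).2
      exact ⟨this.1.le, this.2⟩
  obtain ⟨Xmax, hX1, hX2, hX3⟩ := pad_finset a b hab (insert b Wmax) hsubIccmax (m+1)
    (le_trans (Finset.card_insert_le _ _) (by omega))
  obtain ⟨Xmin, hY1, hY2, hY3⟩ := pad_finset a b hab (insert a Wmin) hsubIccmin (m+1)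
    (le_trans (Finset.card_insert_le _ _) (by omega))
  refine ⟨Xmax, Xmin, hX2, hY2, ?_, ?_, hX3, hY3,
    hX1 (Finset.mem_insert_self b Wmax), hY1 (Finset.mem_insert_self a Wmin)⟩
  · intro x hx
    have hxI : x ∈ Set.Icc a b := measSupport_subset_Icc (hμmax.2.1) hx
    refine Finset.mem_coe.2 (hX1 ?_)
    by_cases hxb : x = b
    · rw [hxb]; exact Finset.mem_insert_self b Wmax
    · refine Finset.mem_insert_of_mem ?_
      have : x ∈ measSupport μmax ∩ Set.Ico a b :=
        ⟨hx, hxI.1, lt_of_le_of_ne hxI.2 hxb⟩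
      exact Finset.mem_coe.1 (hWmax1 this)
  · intro x hx
    have hxI : x ∈ Set.Icc a b := measSupport_subset_Icc (hμmin.2.1) hx
    refine Finset.mem_coe.2 (hY1 ?_)
    by_cases hxa : x = a
    · rw [hxa]; exact Finset.mem_insert_self a Wmin
    · refine Finset.mem_insert_of_mem ?_
      have : x ∈ measSupport μmin ∩ Set.Ioc a b :=
        ⟨hx, lt_of_le_of_ne hxI.1 (Ne.symm hxa), hxI.2⟩
      exact Finset.mem_coe.1 (hWmin1 this)
end

section
/- Let a < b be real numbers, let m ≥ 1 and n = 2m−1 be odd, and let g_0,…,g_{n+1} be continuous functions on [a,b] such that both (g_0,…,g_n) and (g_0,…,g_{n+1}) are T_+-systems on [a,b]. Let c ∈ ℝ^{n+1} with M_c ≠ ∅, and let μ_max (respectively μ_min) be a measure in M_c maximizing (respectively minimizing) ∫ g_{n+1} dμ over μ ∈ M_c. Then there exist subsets X_max and X_min of [a,b] such that supp μ_max ⊆ X_max, supp μ_min ⊆ X_min, card X_max = m+1, card X_min = m, and {a,b} ⊆ X_max. -/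
open MeasureTheory

namespace TPlusAux

variable {a b : ℝ}

lemma measSupport_subset_Icc {μ : Measure ℝ} (h : μ (Set.Icc a b)ᶜ = 0) :
    measSupport μ ⊆ Set.Icc a b := by
  intro x hx
  by_contra hxI
  have h2 := hx (Set.Icc a b)ᶜ isClosed_Icc.isOpen_compl hxI
  rw [h] at h2
  exact lt_irrefl 0 h2

/-- Extension of a function on `[a,b]` to a continuous function on `ℝ`. -/
noncomputable def ext (hab : a ≤ b) (f : ℝ → ℝ) : ℝ → ℝ :=
  Set.IccExtend hab ((Set.Icc a b).restrict f)

lemma ext_eq (hab : a ≤ b) (f : ℝ → ℝ) {x : ℝ} (hx : x ∈ Set.Icc a b) :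
    ext hab f x = f x := by
  rw [ext, Set.IccExtend_of_mem hab _ hx]
  rfl

lemma ext_continuous (hab : a ≤ b) {f : ℝ → ℝ} (hf : ContinuousOn f (Set.Icc a b)) :
    Continuous (ext hab f) :=
  Continuous.Icc_extend' (continuousOn_iff_continuous_restrict.mp hf)

lemma ae_mem_Icc {μ : Measure ℝ} (h : μ (Set.Icc a b)ᶜ = 0) :
    ∀ᵐ x ∂μ, x ∈ Set.Icc a b := by
  rw [MeasureTheory.ae_iff]
  have : {x | ¬ x ∈ Set.Icc a b} = (Set.Icc a b)ᶜ := rfl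
  rw [this, h]

lemma integral_ext (hab : a ≤ b) (f : ℝ → ℝ) {μ : Measure ℝ} (h : μ (Set.Icc a b)ᶜ = 0) :
    ∫ x, ext hab f x ∂μ = ∫ x, f x ∂μ := by
  refine integral_congr_ae ?_
  filter_upwards [ae_mem_Icc h] with x hx
  exact ext_eq hab f hx

lemma integrable_aux {f : ℝ → ℝ} (hf : Continuous f) (ν : Measure ℝ) [IsFiniteMeasure ν]
    (hν : ν (Set.Icc a b)ᶜ = 0) : Integrable f ν := by
  obtain ⟨C, hC⟩ := (isCompact_Icc (a := a) (b := b)).exists_bound_of_continuousOn hf.continuousOn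
  refine Integrable.mono' (integrable_const C) hf.aestronglyMeasurable ?_
  filter_upwards [ae_mem_Icc hν] with x hx
  exact hC x hx

/-- Dichotomy: either a set is covered by a finset of card `< k`, or it contains
`k` strictly increasing points. -/
lemma finite_or_points (S : Set ℝ) (k : ℕ) :
    (∃ F : Finset ℝ, S ⊆ ↑F ∧ F.card < k) ∨
      (∃ x : Fin k → ℝ, StrictMono x ∧ ∀ j, x j ∈ S) := by
  classical
  have key : ∀ (F : Finset ℝ), ↑F ⊆ S → F.card = k →
      ∃ x : Fin k → ℝ, StrictMono x ∧ ∀ j, x j ∈ S := by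
    intro F hFS hcard
    refine ⟨fun j => (F.orderIsoOfFin hcard j : ℝ), ?_, fun j => hFS (F.orderIsoOfFin hcard j).2⟩
    intro i j hij
    exact_mod_cast (F.orderIsoOfFin hcard).strictMono hij
  by_cases hS : S.Finite
  · by_cases hc : hS.toFinset.card < k
    · exact Or.inl ⟨hS.toFinset, by simp, hc⟩
    · right
      obtain ⟨F, hFsub, hFcard⟩ := Finset.exists_subset_card_eq (le_of_not_gt hc)
      exact key F (fun x hx => hS.mem_toFinset.mp (hFsub hx)) hFcard
  · right
    obtain ⟨F, hFS, hcard⟩ := Set.Infinite.exists_subset_card_eq hS k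
    exact key F hFS hcard

/-- Pad a finset inside `[a,b]` to any larger cardinality. -/
lemma pad (hab : a < b) (F : Finset ℝ) (hF : ↑F ⊆ Set.Icc a b) {k : ℕ} (hk : F.card ≤ k) :
    ∃ F' : Finset ℝ, F ⊆ F' ∧ ↑F' ⊆ Set.Icc a b ∧ F'.card = k := by
  classical
  have hinf : (Set.Icc a b \ ↑F).Infinite := by
    refine Set.Infinite.diff ?_ (F.finite_toSet)
    exact Set.infinite_coe_iff.mp (Set.Icc.infinite hab)
  obtain ⟨G, hGsub, hGcard⟩ := hinf.exists_subset_card_eq (k - F.card)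
  refine ⟨F ∪ G, Finset.subset_union_left, ?_, ?_⟩
  · intro x hx
    rcases Finset.mem_union.mp (by exact_mod_cast hx) with h | h
    · exact hF h
    · exact (hGsub h).1
  · have hdisj : Disjoint F G := by
      refine Finset.disjoint_left.mpr fun x hxF hxG => ?_
      exact (hGsub hxG).2 (by exact_mod_cast hxF)
    rw [Finset.card_union_of_disjoint hdisj, hGcard]
    omega

lemma det_stability {N : ℕ} (C0 : Fin (N + 2) → Fin (N + 2) → ℝ)
    (hD : 0 < (Matrix.of fun i k => C0 k i).det)
    (hM : ∀ k : Fin (N + 2), 0 <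
      (Matrix.of fun (i j : Fin (N + 1)) => C0 (Fin.succAbove k j) (Fin.castSucc i)).det) :
    ∃ η > 0, ∀ C : Fin (N + 2) → Fin (N + 2) → ℝ,
      (∀ k i, dist (C k i) (C0 k i) ≤ η) →
      0 < (Matrix.of fun i k => C k i).det ∧
      ∀ k : Fin (N + 2), 0 <
        (Matrix.of fun (i j : Fin (N + 1)) => C (Fin.succAbove k j) (Fin.castSucc i)).det := by
  classical
  have hcont : ∀ (h : (Fin (N + 2) → Fin (N + 2) → ℝ) → ℝ), Continuous h → 0 < h C0 →
      ∃ η > 0, ∀ C, dist C C0 ≤ η → 0 < h C := by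
    intro h hc hpos
    obtain ⟨δ, hδ, hb⟩ := Metric.continuousAt_iff.mp hc.continuousAt (h C0) hpos
    refine ⟨δ / 2, by linarith, fun C hC => ?_⟩
    have h2 := hb (show dist C C0 < δ by
      calc dist C C0 ≤ δ / 2 := hC
        _ < δ := by linarith)
    rw [Real.dist_eq, abs_lt] at h2
    linarith [h2.1]
  have hDc : Continuous fun C : Fin (N + 2) → Fin (N + 2) → ℝ =>
      (Matrix.of fun i k => C k i).det := by
    apply Continuous.matrix_det
    exact continuous_pi fun i => continuous_pi fun k => (continuous_apply i).comp (continuous_apply k)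
  have hMc : ∀ k : Fin (N + 2), Continuous fun C : Fin (N + 2) → Fin (N + 2) → ℝ =>
      (Matrix.of fun (i j : Fin (N + 1)) => C (Fin.succAbove k j) (Fin.castSucc i)).det := by
    intro k
    apply Continuous.matrix_det
    exact continuous_pi fun i => continuous_pi fun j =>
      (continuous_apply (Fin.castSucc i)).comp (continuous_apply (Fin.succAbove k j))
  obtain ⟨ηD, hηD, hD2⟩ := hcont _ hDc hD
  have hMex : ∀ k, ∃ η > 0, ∀ C, dist C C0 ≤ η → 0 <
      (Matrix.of fun (i j : Fin (N + 1)) => C (Fin.succAbove k j) (Fin.castSucc i)).det :=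
    fun k => hcont _ (hMc k) (hM k)
  choose ηM hηM hM2 using hMex
  set η : ℝ := min ηD (Finset.univ.inf' Finset.univ_nonempty ηM) with hηdef
  have hηpos : 0 < η := by
    refine lt_min hηD ?_
    rw [Finset.lt_inf'_iff]
    exact fun k _ => hηM k
  refine ⟨η, hηpos, fun C hC => ?_⟩
  have hdist : dist C C0 ≤ η := by
    rw [dist_pi_le_iff hηpos.le]
    intro k
    rw [dist_pi_le_iff hηpos.le]
    exact fun i => hC k i
  constructor
  · exact hD2 C (hdist.trans (min_le_left _ _))
  · intro k
    refine hM2 k C (hdist.trans ((min_le_right _ _).trans ?_))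
    exact Finset.inf'_le _ (Finset.mem_univ k)

lemma cofactor_identities {N : ℕ} (C : Fin (N + 2) → Fin (N + 2) → ℝ) :
    (∑ k : Fin (N + 2), ((-1 : ℝ) ^ ((N + 1) + (k : ℕ)) *
        (Matrix.of fun (i j : Fin (N + 1)) => C (Fin.succAbove k j) (Fin.castSucc i)).det)
        * C k (Fin.last (N + 1))) = (Matrix.of fun i k => C k i).det ∧
    ∀ i0 : Fin (N + 1), (∑ k : Fin (N + 2), ((-1 : ℝ) ^ ((N + 1) + (k : ℕ)) *
        (Matrix.of fun (i j : Fin (N + 1)) => C (Fin.succAbove k j) (Fin.castSucc i)).det)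
        * C k (Fin.castSucc i0)) = 0 := by
  classical
  set A : Matrix (Fin (N + 2)) (Fin (N + 2)) ℝ := Matrix.of fun i k => C k i with hA
  constructor
  · rw [show (Matrix.of fun i k => C k i).det = A.det from rfl,
      Matrix.det_succ_row A (Fin.last (N + 1))]
    refine Finset.sum_congr rfl fun k _ => ?_
    have hsub : A.submatrix (Fin.last (N + 1)).succAbove k.succAbove =
        Matrix.of fun (i j : Fin (N + 1)) => C (Fin.succAbove k j) (Fin.castSucc i) := by
      rw [Fin.succAbove_last]
      rfl
    rw [hsub, Fin.val_last, show A (Fin.last (N + 1)) k = C k (Fin.last (N + 1)) from rfl]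
    ring
  · intro i0
    set A' : Matrix (Fin (N + 2)) (Fin (N + 2)) ℝ :=
      A.updateRow (Fin.last (N + 1)) (A (Fin.castSucc i0)) with hA'
    have h0 : A'.det = 0 := by
      refine Matrix.det_zero_of_row_eq (i := Fin.castSucc i0) (j := Fin.last (N + 1))
        (Fin.castSucc_lt_last i0).ne ?_
      rw [hA', Matrix.updateRow_self, Matrix.updateRow_ne (Fin.castSucc_lt_last i0).ne]
    rw [Matrix.det_succ_row A' (Fin.last (N + 1))] at h0
    rw [← h0]
    refine Finset.sum_congr rfl fun k _ => ?_
    have hrow : A' (Fin.last (N + 1)) k = C k (Fin.castSucc i0) := by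
      rw [hA', Matrix.updateRow_self]; rfl
    have hsub : A'.submatrix (Fin.last (N + 1)).succAbove k.succAbove =
        Matrix.of fun (i j : Fin (N + 1)) => C (Fin.succAbove k j) (Fin.castSucc i) := by
      rw [Fin.succAbove_last]
      ext i j
      simp only [Matrix.submatrix_apply]
      rw [hA', Matrix.updateRow_ne (Fin.castSucc_lt_last i).ne]
      rfl
    rw [hrow, hsub, Fin.val_last]
    ring

end TPlusAux

namespace TPlusAux

/-- The core perturbation lemma. -/
lemma core {a b : ℝ} {N : ℕ} (hab : a < b)
    (G : Fin (N + 2) → ℝ → ℝ) (hGc : ∀ i, Continuous (G i))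
    (hT : ∀ x : Fin (N + 1) → ℝ, StrictMono x → (∀ j, x j ∈ Set.Icc a b) →
      0 < (Matrix.of fun (i j : Fin (N + 1)) => G (Fin.castSucc i) (x j)).det)
    (hT' : ∀ x : Fin (N + 2) → ℝ, StrictMono x → (∀ j, x j ∈ Set.Icc a b) →
      0 < (Matrix.of fun i j => G i (x j)).det)
    (μ : Measure ℝ) [IsFiniteMeasure μ] (hμn : μ (Set.Icc a b)ᶜ = 0)
    (x : Fin (N + 2) → ℝ) (hx : StrictMono x) (hxI : ∀ k, x k ∈ Set.Icc a b)
    (ε : ℝ) (hε : ε = 1 ∨ ε = -1)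
    (hsupp : ∀ k : Fin (N + 2), ε * (-1 : ℝ) ^ ((N + 1) + (k : ℕ)) < 0 → x k ∈ measSupport μ) :
    ∃ ν : Measure ℝ, IsFiniteMeasure ν ∧ ν (Set.Icc a b)ᶜ = 0 ∧
      (∀ i : Fin (N + 1), ∫ y, G (Fin.castSucc i) y ∂ν = ∫ y, G (Fin.castSucc i) y ∂μ) ∧
      ε * ∫ y, G (Fin.last (N + 1)) y ∂μ < ε * ∫ y, G (Fin.last (N + 1)) y ∂ν := by
  classical
  set σ : Fin (N + 2) → ℝ := fun k => ε * (-1 : ℝ) ^ ((N + 1) + (k : ℕ)) with hσdef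
  have hσpm : ∀ k, σ k = 1 ∨ σ k = -1 := by
    intro k
    rcases hε with h | h <;> rcases Nat.even_or_odd ((N + 1) + (k : ℕ)) with he | he <;>
      simp [hσdef, h, he.neg_one_pow]
  set S : Finset (Fin (N + 2)) := Finset.univ.filter (fun k => σ k < 0) with hSdef
  have hSmem : ∀ k, k ∈ S ↔ σ k < 0 := by
    intro k; rw [hSdef, Finset.mem_filter]; simp
  -- ideal column family and determinant positivity
  set C0 : Fin (N + 2) → Fin (N + 2) → ℝ := fun k i => G i (x k) with hC0def
  have hD0 : 0 < (Matrix.of fun i k => C0 k i).det := hT' x hx hxI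
  have hM0 : ∀ k : Fin (N + 2), 0 <
      (Matrix.of fun (i j : Fin (N + 1)) => C0 (Fin.succAbove k j) (Fin.castSucc i)).det := by
    intro k
    exact hT (x ∘ Fin.succAbove k) (hx.comp (Fin.strictMono_succAbove k)) (fun j => hxI _)
  obtain ⟨η, hηpos, hstab⟩ := det_stability C0 hD0 hM0
  -- minimal gap between the points
  set gmin : ℝ := Finset.univ.inf' Finset.univ_nonempty
      (fun i : Fin (N + 1) => x i.succ - x i.castSucc) with hgmindef
  have hgminpos : 0 < gmin := by
    rw [hgmindef, Finset.lt_inf'_iff]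
    exact fun i _ => sub_pos.mpr (hx Fin.castSucc_lt_succ)
  have hgap : ∀ k l : Fin (N + 2), k < l → gmin ≤ x l - x k := by
    intro k l hkl
    have hkN : (k : ℕ) < N + 1 := by
      have := l.is_le
      have := (Fin.lt_iff_val_lt_val.mp hkl)
      omega
    set k' : Fin (N + 1) := ⟨(k : ℕ), hkN⟩ with hk'def
    have h1 : gmin ≤ x k'.succ - x k'.castSucc :=
      Finset.inf'_le _ (Finset.mem_univ k')
    have h2 : x k'.castSucc = x k := by congr 1
    have h3 : x k'.succ ≤ x l := by
      apply hx.monotone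
      rw [Fin.le_def]
      have := Fin.lt_iff_val_lt_val.mp hkl
      simp only [Fin.val_succ, hk'def]
      omega
    rw [h2] at h1
    linarith
  -- localization radius
  have hδex : ∀ k : Fin (N + 2), ∃ ρ, 0 < ρ ∧ ∀ i : Fin (N + 2), ∀ y : ℝ,
      |y - x k| < ρ → |G i y - G i (x k)| ≤ η := by
    intro k
    have h1 : ∀ i : Fin (N + 2), ∃ δ > 0, ∀ y : ℝ,
        dist y (x k) < δ → dist (G i y) (G i (x k)) < η :=
      fun i => Metric.continuous_iff.mp (hGc i) (x k) η hηpos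
    choose δf hδf1 hδf2 using h1
    refine ⟨Finset.univ.inf' Finset.univ_nonempty δf, ?_, ?_⟩
    · rw [Finset.lt_inf'_iff]; exact fun i _ => hδf1 i
    · intro i y hy
      have h3 : dist y (x k) < δf i :=
        lt_of_lt_of_le (by rwa [Real.dist_eq]) (Finset.inf'_le _ (Finset.mem_univ i))
      have h4 := hδf2 i y h3
      rw [Real.dist_eq] at h4
      exact h4.le
  choose ρf hρfpos hρf using hδex
  set r : Fin (N + 2) → ℝ := fun k => min (ρf k) (gmin / 2) with hrdef
  have hrpos : ∀ k, 0 < r k := fun k => lt_min (hρfpos k) (by linarith)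
  have hrρ : ∀ k, r k ≤ ρf k := fun k => min_le_left _ _
  have hrg : ∀ k, r k ≤ gmin / 2 := fun k => min_le_right _ _
  set B : Fin (N + 2) → Set ℝ := fun k => Set.Ioo (x k - r k) (x k + r k) with hBdef
  have hBmeas : ∀ k, MeasurableSet (B k) := fun k => measurableSet_Ioo
  have hBdisj : ∀ k l, k ≠ l → Disjoint (B k) (B l) := by
    intro k l hkl
    rw [Set.disjoint_left]
    rintro y ⟨hy1, hy2⟩ ⟨hy3, hy4⟩
    rcases lt_or_gt_of_ne hkl with h | h
    · have := hgap k l h; have := hrg k; have := hrg l; linarith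
    · have := hgap l k h; have := hrg k; have := hrg l; linarith
  have hμB : ∀ k ∈ S, 0 < μ (B k) := by
    intro k hk
    refine hsupp k ((hSmem k).mp hk) (B k) isOpen_Ioo ?_
    have := hrpos k
    exact ⟨by linarith, by linarith⟩
  have hμBfin : ∀ k, μ (B k) ≠ ⊤ := fun k => measure_ne_top μ _
  have hqpos : ∀ k ∈ S, 0 < (μ (B k)).toReal := by
    intro k hk
    exact ENNReal.toReal_pos (hμB k hk).ne' (hμBfin k)
  -- the perturbed columns
  set C : Fin (N + 2) → Fin (N + 2) → ℝ := fun k i =>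
    if k ∈ S then (∫ y in B k, G i y ∂μ) / (μ (B k)).toReal else G i (x k) with hCdef
  have hIntB : ∀ (i : Fin (N + 2)) k, Integrable (G i) (μ.restrict (B k)) := by
    intro i k
    refine integrable_aux (a := a) (b := b) (hGc i) _ ?_
    have h1 : μ.restrict (B k) (Set.Icc a b)ᶜ = μ ((Set.Icc a b)ᶜ ∩ B k) :=
      Measure.restrict_apply measurableSet_Icc.compl
    rw [h1]
    exact measure_mono_null Set.inter_subset_left hμn
  have hCclose : ∀ k i, dist (C k i) (C0 k i) ≤ η := by
    intro k i
    by_cases hk : k ∈ S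
    · have hq := hqpos k hk
      have hint1 : ∫ y in B k, (G i y - G i (x k)) ∂μ
          = (∫ y in B k, G i y ∂μ) - (μ (B k)).toReal * G i (x k) := by
        rw [integral_sub (hIntB i k) (integrable_const _), integral_const,
          measureReal_def, Measure.restrict_apply_univ, smul_eq_mul]
      have hbound : |∫ y in B k, (G i y - G i (x k)) ∂μ| ≤ η * (μ (B k)).toReal := by
        have := norm_integral_le_of_norm_le_const (μ := μ.restrict (B k))
          (f := fun y => G i y - G i (x k)) (C := η) ?_
        · rwa [measureReal_def, Measure.restrict_apply_univ, Real.norm_eq_abs] at this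
        · filter_upwards [ae_restrict_mem (hBmeas k)] with y hy
          rw [Real.norm_eq_abs]
          refine hρf k i y ?_
          rw [abs_sub_lt_iff]
          rw [hBdef] at hy
          obtain ⟨hy1, hy2⟩ := hy
          have := hrρ k
          constructor <;> linarith
      rw [Real.dist_eq]
      have hCki : C k i = (∫ y in B k, G i y ∂μ) / (μ (B k)).toReal := by
        rw [hCdef]; simp [hk]
      have hC0ki : C0 k i = G i (x k) := rfl
      rw [hCki, hC0ki]
      have key : (∫ y in B k, G i y ∂μ) / (μ (B k)).toReal - G i (x k)
          = (∫ y in B k, (G i y - G i (x k)) ∂μ) / (μ (B k)).toReal := by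
        rw [hint1]
        field_simp
      rw [key, abs_div, abs_of_pos hq, div_le_iff₀ hq]
      exact hbound
    · have : C k i = C0 k i := by rw [hCdef]; simp [hk]; rfl
      rw [this, dist_self]
      exact hηpos.le
  obtain ⟨hDpos, hMpos⟩ := hstab C hCclose
  -- the coefficient vector
  set u : Fin (N + 2) → ℝ := fun k => (-1 : ℝ) ^ ((N + 1) + (k : ℕ)) *
    (Matrix.of fun (i j : Fin (N + 1)) => C (Fin.succAbove k j) (Fin.castSucc i)).det with hudef
  set w : Fin (N + 2) → ℝ := fun k => ε * u k with hwdef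
  have hεsq : ε * ε = 1 := by rcases hε with h | h <;> rw [h] <;> norm_num
  have hwS : ∀ k ∈ S, w k < 0 := by
    intro k hk
    have h1 : σ k < 0 := (hSmem k).mp hk
    have : w k = σ k * (Matrix.of fun (i j : Fin (N + 1)) =>
        C (Fin.succAbove k j) (Fin.castSucc i)).det := by
      rw [hwdef, hudef, hσdef]; ring
    rw [this]
    exact mul_neg_of_neg_of_pos h1 (hMpos k)
  have hwSc : ∀ k, k ∉ S → 0 < w k := by
    intro k hk
    have h1 : σ k = 1 := by
      rcases hσpm k with h | h
      · exact h
      · exact absurd ((hSmem k).mpr (by rw [h]; norm_num)) hk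
    have : w k = σ k * (Matrix.of fun (i j : Fin (N + 1)) =>
        C (Fin.succAbove k j) (Fin.castSucc i)).det := by
      rw [hwdef, hudef, hσdef]; ring
    rw [this, h1, one_mul]
    exact hMpos k
  -- total mass scaling
  set t : ℝ := if hS : S.Nonempty then S.inf' hS (fun k => (μ (B k)).toReal / (-(w k))) else 1
    with htdef
  have htpos : 0 < t := by
    rw [htdef]
    split
    · rename_i hS
      rw [Finset.lt_inf'_iff]
      intro k hk
      exact div_pos (hqpos k hk) (by linarith [hwS k hk])
    · norm_num
  have htle : ∀ k ∈ S, t * (-(w k)) ≤ (μ (B k)).toReal := by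
    intro k hk
    have hS : S.Nonempty := ⟨k, hk⟩
    have h1 : t ≤ (μ (B k)).toReal / (-(w k)) := by
      rw [htdef, dif_pos hS]
      exact Finset.inf'_le _ hk
    have h2 : 0 < -(w k) := by linarith [hwS k hk]
    calc t * (-(w k)) ≤ ((μ (B k)).toReal / (-(w k))) * (-(w k)) :=
          mul_le_mul_of_nonneg_right h1 h2.le
      _ = (μ (B k)).toReal := div_mul_cancel₀ _ h2.ne'
  set tc : Fin (N + 2) → ℝ := fun k => t * (-(w k)) / (μ (B k)).toReal with htcdef
  have htc1 : ∀ k ∈ S, tc k ≤ 1 := by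
    intro k hk
    rw [htcdef]
    rw [div_le_one (hqpos k hk)]
    exact htle k hk
  set U : Set ℝ := ⋃ k ∈ S, B k with hUdef
  have hUmeas : MeasurableSet U := S.measurableSet_biUnion (fun k _ => hBmeas k)
  set ν : Measure ℝ := μ.restrict Uᶜ
      + ∑ k ∈ S, ENNReal.ofReal (1 - tc k) • μ.restrict (B k)
      + ∑ k ∈ Sᶜ, ENNReal.ofReal (t * w k) • Measure.dirac (x k) with hνdef
  -- finiteness
  have hfin2 : IsFiniteMeasure (∑ k ∈ S, ENNReal.ofReal (1 - tc k) • μ.restrict (B k)) := by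
    constructor
    rw [Measure.finset_sum_apply]
    refine ENNReal.sum_lt_top.mpr fun k _ => ?_
    rw [Measure.smul_apply, smul_eq_mul]
    exact ENNReal.mul_lt_top ENNReal.ofReal_lt_top (measure_lt_top _ _)
  have hfin3 : IsFiniteMeasure (∑ k ∈ Sᶜ, ENNReal.ofReal (t * w k) • Measure.dirac (x k)) := by
    constructor
    rw [Measure.finset_sum_apply]
    refine ENNReal.sum_lt_top.mpr fun k _ => ?_
    rw [Measure.smul_apply, smul_eq_mul]
    exact ENNReal.mul_lt_top ENNReal.ofReal_lt_top (measure_lt_top _ _)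
  have hνfin : IsFiniteMeasure ν := by
    rw [hνdef]
    infer_instance
  -- ν vanishes outside [a,b]
  have hrestrn : ∀ s : Set ℝ, μ.restrict s (Set.Icc a b)ᶜ = 0 := by
    intro s
    rw [Measure.restrict_apply measurableSet_Icc.compl]
    exact measure_mono_null Set.inter_subset_left hμn
  have hdiracn : ∀ k : Fin (N + 2), Measure.dirac (x k) (Set.Icc a b)ᶜ = 0 := by
    intro k
    rw [Measure.dirac_apply' _ measurableSet_Icc.compl]
    exact Set.indicator_of_notMem (by simp [hxI k]) _
  have hνn : ν (Set.Icc a b)ᶜ = 0 := by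
    rw [hνdef]
    simp only [Measure.add_apply, Measure.finset_sum_apply, Measure.smul_apply, smul_eq_mul]
    rw [hrestrn]
    have e2 : ∑ k ∈ S, ENNReal.ofReal (1 - tc k) * μ.restrict (B k) (Set.Icc a b)ᶜ = 0 :=
      Finset.sum_eq_zero fun k _ => by rw [hrestrn]; ring
    have e3 : ∑ k ∈ Sᶜ, ENNReal.ofReal (t * w k) * Measure.dirac (x k) (Set.Icc a b)ᶜ = 0 :=
      Finset.sum_eq_zero fun k _ => by rw [hdiracn]; ring
    rw [e2, e3]
    simp
  -- integral of ν
  have hIntd : ∀ (i : Fin (N + 2)) (k : Fin (N + 2)), Integrable (G i) (Measure.dirac (x k)) :=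
    fun i k => integrable_aux (a := a) (b := b) (hGc i) _ (hdiracn k)
  have hIntUc : ∀ i : Fin (N + 2), Integrable (G i) (μ.restrict Uᶜ) :=
    fun i => integrable_aux (a := a) (b := b) (hGc i) _ (hrestrn _)
  have hint_ν : ∀ i : Fin (N + 2), ∫ y, G i y ∂ν = ∫ y in Uᶜ, G i y ∂μ
      + ∑ k ∈ S, (1 - tc k) * ∫ y in B k, G i y ∂μ
      + ∑ k ∈ Sᶜ, (t * w k) * G i (x k) := by
    intro i
    have hI2 : Integrable (G i) (∑ k ∈ S, ENNReal.ofReal (1 - tc k) • μ.restrict (B k)) :=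
      integrable_finset_sum_measure.mpr fun k _ =>
        (hIntB i k).smul_measure ENNReal.ofReal_ne_top
    have hI3 : Integrable (G i) (∑ k ∈ Sᶜ, ENNReal.ofReal (t * w k) • Measure.dirac (x k)) :=
      integrable_finset_sum_measure.mpr fun k _ =>
        (hIntd i k).smul_measure ENNReal.ofReal_ne_top
    rw [hνdef, integral_add_measure ((hIntUc i).add_measure hI2) hI3,
      integral_add_measure (hIntUc i) hI2,
      integral_finset_sum_measure (fun k _ => (hIntB i k).smul_measure ENNReal.ofReal_ne_top),
      integral_finset_sum_measure (fun k _ => (hIntd i k).smul_measure ENNReal.ofReal_ne_top)]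
    congr 1
    · congr 1
      refine Finset.sum_congr rfl fun k hk => ?_
      rw [integral_smul_measure, ENNReal.toReal_ofReal (by linarith [htc1 k hk]), smul_eq_mul]
    · refine Finset.sum_congr rfl fun k hk => ?_
      have hw : 0 ≤ t * w k := by
        have := hwSc k (Finset.mem_compl.mp hk)
        nlinarith
      rw [integral_smul_measure, ENNReal.toReal_ofReal hw, smul_eq_mul, integral_dirac]
  -- integral of μ decomposed
  have hint_μ : ∀ i : Fin (N + 2), ∫ y, G i y ∂μ
      = ∫ y in Uᶜ, G i y ∂μ + ∑ k ∈ S, ∫ y in B k, G i y ∂μ := by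
    intro i
    have h1 : ∫ y in U, G i y ∂μ + ∫ y in Uᶜ, G i y ∂μ = ∫ y, G i y ∂μ :=
      integral_add_compl hUmeas (integrable_aux (a := a) (b := b) (hGc i) μ hμn)
    have h2 : ∫ y in U, G i y ∂μ = ∑ k ∈ S, ∫ y in B k, G i y ∂μ := by
      rw [hUdef]
      exact integral_biUnion_finset S (fun k _ => hBmeas k)
        (fun k _ l _ hkl => hBdisj k l hkl) (fun k _ => hIntB i k)
    linarith
  -- the change of moments
  have hdelta : ∀ i : Fin (N + 2), ∫ y, G i y ∂ν
      = ∫ y, G i y ∂μ + t * (ε * ∑ k, u k * C k i) := by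
    intro i
    rw [hint_ν i, hint_μ i]
    have e1 : ∀ k ∈ S, (1 - tc k) * ∫ y in B k, G i y ∂μ
        = (∫ y in B k, G i y ∂μ) + t * (w k * C k i) := by
      intro k hk
      have hq := hqpos k hk
      have hCki : C k i = (∫ y in B k, G i y ∂μ) / (μ (B k)).toReal := by
        rw [hCdef]; simp [hk]
      have hBint : ∫ y in B k, G i y ∂μ = C k i * (μ (B k)).toReal := by
        rw [hCki]; field_simp
      rw [hBint, htcdef]
      field_simp
      ring
    have e2 : ∀ k ∈ Sᶜ, (t * w k) * G i (x k) = t * (w k * C k i) := by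
      intro k hk
      have hknot := Finset.mem_compl.mp hk
      have : C k i = G i (x k) := by rw [hCdef]; simp [hknot]
      rw [this]; ring
    rw [Finset.sum_congr rfl e1, Finset.sum_congr rfl e2, Finset.sum_add_distrib]
    have e3 : ∑ k ∈ S, t * (w k * C k i) + ∑ k ∈ Sᶜ, t * (w k * C k i)
        = t * ∑ k, w k * C k i := by
      rw [← Finset.mul_sum, ← Finset.mul_sum, ← mul_add, Finset.sum_add_sum_compl]
    have e4 : ∑ k, w k * C k i = ε * ∑ k, u k * C k i := by
      rw [Finset.mul_sum]
      exact Finset.sum_congr rfl fun k _ => by rw [hwdef]; ring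
    rw [← e4]
    linarith [e3]
  -- conclusion
  obtain ⟨hlast, hrows⟩ := cofactor_identities C
  refine ⟨ν, hνfin, hνn, ?_, ?_⟩
  · intro i0
    rw [hdelta (Fin.castSucc i0)]
    have : ∑ k, u k * C k (Fin.castSucc i0) = 0 := by
      simp only [hudef]
      exact hrows i0
    rw [this]
    ring
  · rw [hdelta (Fin.last (N + 1))]
    have hdet : ∑ k, u k * C k (Fin.last (N + 1))
        = (Matrix.of fun i k => C k i).det := by
      simp only [hudef]
      exact hlast
    rw [hdet]
    have h9 : ε * (∫ y, G (Fin.last (N + 1)) y ∂μ + t * (ε * (Matrix.of fun i k => C k i).det))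
        = ε * ∫ y, G (Fin.last (N + 1)) y ∂μ + t * (Matrix.of fun i k => C k i).det := by
      have : ε * (t * (ε * (Matrix.of fun i k => C k i).det))
          = (ε * ε) * (t * (Matrix.of fun i k => C k i).det) := by ring
      rw [mul_add, this, hεsq]
      ring
    rw [h9]
    nlinarith [mul_pos htpos hDpos]

end TPlusAux

namespace TPlusAux

/-- Interleaving for the maximizer. -/
lemma interleave_max {m : ℕ} (hm : 1 ≤ m) {a b : ℝ} (hab : a < b) (s : Fin m → ℝ)
    (hs : StrictMono s) (hmem : ∀ j, s j ∈ Set.Ioo a b) :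
    ∃ x : Fin (2 * m - 1 + 2) → ℝ, StrictMono x ∧ (∀ k, x k ∈ Set.Icc a b) ∧
      (∀ k : Fin (2 * m - 1 + 2), Odd (k : ℕ) → ∃ j, x k = s j) := by
  classical
  set s' : ℕ → ℝ := fun n => if h : n < m then s ⟨n, h⟩ else 0 with hs'def
  have hs'eq : ∀ (n : ℕ) (h : n < m), s' n = s ⟨n, h⟩ := by
    intro n h; simp only [hs'def]; rw [dif_pos h]
  have hs'lt : ∀ p q : ℕ, p < q → q < m → s' p < s' q := by
    intro p q hpq hq
    rw [hs'eq p (by omega), hs'eq q hq]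
    exact hs (by simp [Fin.lt_def]; omega)
  have hs'mem : ∀ (n : ℕ), n < m → s' n ∈ Set.Ioo a b := by
    intro n h; rw [hs'eq n h]; exact hmem _
  set z' : ℕ → ℝ := fun n => if n = 0 then a else if n = m then b
    else (s' (n - 1) + s' n) / 2 with hz'def
  have hz'0 : z' 0 = a := by simp [hz'def]
  have hz'm : z' m = b := by
    simp only [hz'def]
    rcases Nat.eq_zero_or_pos m with h | h
    · omega
    · rw [if_neg (by omega)]; simp
  have hz'mid : ∀ n : ℕ, n ≠ 0 → n ≠ m → z' n = (s' (n - 1) + s' n) / 2 := by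
    intro n h0 hM; simp only [hz'def]; rw [if_neg h0, if_neg hM]
  have hz_lt_s : ∀ n : ℕ, n < m → z' n < s' n := by
    intro n hn
    rcases Nat.eq_zero_or_pos n with h0 | h0
    · subst h0; rw [hz'0]; exact (hs'mem 0 hn).1
    · rw [hz'mid n (by omega) (by omega)]
      have := hs'lt (n - 1) n (by omega) hn
      linarith
  have hs_lt_z : ∀ n : ℕ, n < m → s' n < z' (n + 1) := by
    intro n hn
    by_cases hM : n + 1 = m
    · rw [hM, hz'm]; exact (hs'mem n hn).2
    · rw [hz'mid (n + 1) (by omega) hM]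
      have := hs'lt n (n + 1) (by omega) (by omega)
      have he : n + 1 - 1 = n := by omega
      rw [he]
      linarith
  have hz'I : ∀ n : ℕ, n ≤ m → z' n ∈ Set.Icc a b := by
    intro n hn
    rcases Nat.eq_zero_or_pos n with h0 | h0
    · subst h0; rw [hz'0]; exact ⟨le_refl a, hab.le⟩
    · by_cases hM : n = m
      · subst hM; rw [hz'm]; exact ⟨hab.le, le_refl b⟩
      · rw [hz'mid n (by omega) hM]
        have p1 := hs'mem (n - 1) (by omega)
        have p2 := hs'mem n (by omega)
        simp only [Set.mem_Ioo] at p1 p2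
        exact ⟨by linarith [p1.1, p2.1], by linarith [p1.2, p2.2]⟩
  set x : Fin (2 * m - 1 + 2) → ℝ := fun k =>
    if (k : ℕ) % 2 = 0 then z' ((k : ℕ) / 2) else s' ((k : ℕ) / 2) with hxdef
  have hxeven : ∀ (k : Fin (2 * m - 1 + 2)), (k : ℕ) % 2 = 0 → x k = z' ((k : ℕ) / 2) := by
    intro k h; simp only [hxdef]; rw [if_pos h]
  have hxodd : ∀ (k : Fin (2 * m - 1 + 2)), ¬ (k : ℕ) % 2 = 0 → x k = s' ((k : ℕ) / 2) := by
    intro k h; simp only [hxdef]; rw [if_neg h]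
  refine ⟨x, ?_, ?_, ?_⟩
  · rw [Fin.strictMono_iff_lt_succ]
    intro i
    have hiv : (i.castSucc : ℕ) = (i : ℕ) := rfl
    have hiv2 : (i.succ : ℕ) = (i : ℕ) + 1 := rfl
    have hiN : (i : ℕ) < 2 * m - 1 + 1 := i.isLt
    by_cases hpar : (i : ℕ) % 2 = 0
    · rw [hxeven i.castSucc (by rw [hiv]; omega), hxodd i.succ (by rw [hiv2]; omega),
        hiv, hiv2, show ((i : ℕ) + 1) / 2 = (i : ℕ) / 2 by omega]
      exact hz_lt_s _ (by omega)
    · rw [hxodd i.castSucc (by rw [hiv]; omega), hxeven i.succ (by rw [hiv2]; omega),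
        hiv, hiv2, show ((i : ℕ) + 1) / 2 = (i : ℕ) / 2 + 1 by omega]
      exact hs_lt_z _ (by omega)
  · intro k
    have hk := k.isLt
    by_cases hpar : (k : ℕ) % 2 = 0
    · rw [hxeven k hpar]; exact hz'I _ (by omega)
    · rw [hxodd k hpar]
      have := hs'mem ((k : ℕ) / 2) (by omega)
      exact ⟨this.1.le, this.2.le⟩
  · intro k hk
    rw [Nat.odd_iff] at hk
    have hkv := k.isLt
    rw [hxodd k (by omega), hs'eq _ (by omega)]
    exact ⟨_, rfl⟩

/-- Interleaving for the minimizer. -/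
lemma interleave_min {m : ℕ} (hm : 1 ≤ m) {a b : ℝ} (hab : a < b) (s : Fin (m + 1) → ℝ)
    (hs : StrictMono s) (hmem : ∀ j, s j ∈ Set.Icc a b) :
    ∃ x : Fin (2 * m - 1 + 2) → ℝ, StrictMono x ∧ (∀ k, x k ∈ Set.Icc a b) ∧
      (∀ k : Fin (2 * m - 1 + 2), Even (k : ℕ) → ∃ j, x k = s j) := by
  classical
  set s' : ℕ → ℝ := fun n => if h : n < m + 1 then s ⟨n, h⟩ else 0 with hs'def
  have hs'eq : ∀ (n : ℕ) (h : n < m + 1), s' n = s ⟨n, h⟩ := by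
    intro n h; simp only [hs'def]; rw [dif_pos h]
  have hs'lt : ∀ p q : ℕ, p < q → q < m + 1 → s' p < s' q := by
    intro p q hpq hq
    rw [hs'eq p (by omega), hs'eq q hq]
    exact hs (by simp [Fin.lt_def]; omega)
  have hs'mem : ∀ (n : ℕ), n < m + 1 → s' n ∈ Set.Icc a b := by
    intro n h; rw [hs'eq n h]; exact hmem _
  set x : Fin (2 * m - 1 + 2) → ℝ := fun k =>
    if (k : ℕ) % 2 = 0 then s' ((k : ℕ) / 2)
    else (s' ((k : ℕ) / 2) + s' ((k : ℕ) / 2 + 1)) / 2 with hxdef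
  have hxeven : ∀ (k : Fin (2 * m - 1 + 2)), (k : ℕ) % 2 = 0 → x k = s' ((k : ℕ) / 2) := by
    intro k h; simp only [hxdef]; rw [if_pos h]
  have hxodd : ∀ (k : Fin (2 * m - 1 + 2)), ¬ (k : ℕ) % 2 = 0 →
      x k = (s' ((k : ℕ) / 2) + s' ((k : ℕ) / 2 + 1)) / 2 := by
    intro k h; simp only [hxdef]; rw [if_neg h]
  refine ⟨x, ?_, ?_, ?_⟩
  · rw [Fin.strictMono_iff_lt_succ]
    intro i
    have hiv : (i.castSucc : ℕ) = (i : ℕ) := rfl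
    have hiv2 : (i.succ : ℕ) = (i : ℕ) + 1 := rfl
    have hiN : (i : ℕ) < 2 * m - 1 + 1 := i.isLt
    by_cases hpar : (i : ℕ) % 2 = 0
    · rw [hxeven i.castSucc (by rw [hiv]; omega), hxodd i.succ (by rw [hiv2]; omega),
        hiv, hiv2, show ((i : ℕ) + 1) / 2 = (i : ℕ) / 2 by omega]
      have := hs'lt ((i : ℕ) / 2) ((i : ℕ) / 2 + 1) (by omega) (by omega)
      linarith
    · rw [hxodd i.castSucc (by rw [hiv]; omega), hxeven i.succ (by rw [hiv2]; omega),
        hiv, hiv2, show ((i : ℕ) + 1) / 2 = (i : ℕ) / 2 + 1 by omega]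
      have := hs'lt ((i : ℕ) / 2) ((i : ℕ) / 2 + 1) (by omega) (by omega)
      linarith
  · intro k
    have hk := k.isLt
    by_cases hpar : (k : ℕ) % 2 = 0
    · rw [hxeven k hpar]; exact hs'mem _ (by omega)
    · rw [hxodd k hpar]
      have p1 := hs'mem ((k : ℕ) / 2) (by omega)
      have p2 := hs'mem ((k : ℕ) / 2 + 1) (by omega)
      simp only [Set.mem_Icc] at p1 p2
      exact ⟨by linarith [p1.1, p2.1], by linarith [p1.2, p2.2]⟩
  · intro k hk
    rw [Nat.even_iff] at hk
    have hkv := k.isLt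
    rw [hxeven k (by omega), hs'eq _ (by omega)]
    exact ⟨_, rfl⟩

end TPlusAux

open TPlusAux in
/-- The odd case `n = 2m - 1` (with `m ≥ 1`) of the localization of the
extremal measures: the supports of the maximizer and the minimizer of
`∫ g_{n+1} dμ` over `M_c` are contained in sets `X_max ⊇ {a, b}` of
cardinality `m + 1` and `X_min` of cardinality `m`, respectively. -/
theorem tplus_extremal_support_odd (a b : ℝ) (hab : a < b) (m : ℕ) (hm : 1 ≤ m)
    (g : Fin (2 * m - 1 + 1) → ℝ → ℝ) (gtop : ℝ → ℝ)
    (hg : ∀ i, ContinuousOn (g i) (Set.Icc a b))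
    (hgtop : ContinuousOn gtop (Set.Icc a b))
    (hT : IsTPlusSystem a b g)
    (hT' : IsTPlusSystem a b (Fin.snoc g gtop))
    (c : Fin (2 * m - 1 + 1) → ℝ)
    (μmax μmin : Measure ℝ)
    (hμmax : MemMc a b g c μmax) (hμmin : MemMc a b g c μmin)
    (hmax : ∀ μ : Measure ℝ, MemMc a b g c μ → ∫ x, gtop x ∂μ ≤ ∫ x, gtop x ∂μmax)
    (hmin : ∀ μ : Measure ℝ, MemMc a b g c μ → ∫ x, gtop x ∂μmin ≤ ∫ x, gtop x ∂μ) :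
    ∃ Xmax Xmin : Finset ℝ,
      ↑Xmax ⊆ Set.Icc a b ∧ ↑Xmin ⊆ Set.Icc a b ∧
      measSupport μmax ⊆ ↑Xmax ∧ measSupport μmin ⊆ ↑Xmin ∧
      Xmax.card = m + 1 ∧ Xmin.card = m ∧ a ∈ Xmax ∧ b ∈ Xmax := by
  classical
  obtain ⟨hfinmax, hnmax, hmommax⟩ := hμmax
  obtain ⟨hfinmin, hnmin, hmommin⟩ := hμmin
  haveI := hfinmax
  haveI := hfinmin
  -- the extended continuous system
  set G : Fin (2 * m - 1 + 1 + 1) → ℝ → ℝ :=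
    fun i => TPlusAux.ext hab.le (Fin.snoc (n := 2 * m - 1 + 1) (α := fun _ => ℝ → ℝ) g gtop i) with hGdef
  have hGc : ∀ i, Continuous (G i) := by
    intro i
    refine TPlusAux.ext_continuous hab.le ?_
    refine Fin.lastCases ?_ ?_ i
    · rw [Fin.snoc_last]; exact hgtop
    · intro j; rw [Fin.snoc_castSucc]; exact hg j
  have hGcast : ∀ i : Fin (2 * m - 1 + 1), G (Fin.castSucc i) = TPlusAux.ext hab.le (g i) := by
    intro i
    have h0 : G (Fin.castSucc i) = TPlusAux.ext hab.le
        (Fin.snoc (n := 2 * m - 1 + 1) (α := fun _ => ℝ → ℝ) g gtop (Fin.castSucc i)) := rfl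
    rw [h0, Fin.snoc_castSucc]
  have hGlast : G (Fin.last (2 * m - 1 + 1)) = TPlusAux.ext hab.le gtop := by
    have h0 : G (Fin.last (2 * m - 1 + 1)) = TPlusAux.ext hab.le
        (Fin.snoc (n := 2 * m - 1 + 1) (α := fun _ => ℝ → ℝ) g gtop (Fin.last (2 * m - 1 + 1))) := rfl
    rw [h0, Fin.snoc_last]
  have hGint : ∀ (ν : Measure ℝ), ν (Set.Icc a b)ᶜ = 0 → ∀ i : Fin (2 * m - 1 + 1),
      ∫ y, G (Fin.castSucc i) y ∂ν = ∫ y, g i y ∂ν := by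
    intro ν hν i
    rw [hGcast i]
    exact TPlusAux.integral_ext hab.le (g i) hν
  have hGtopint : ∀ (ν : Measure ℝ), ν (Set.Icc a b)ᶜ = 0 →
      ∫ y, G (Fin.last (2 * m - 1 + 1)) y ∂ν = ∫ y, gtop y ∂ν := by
    intro ν hν
    rw [hGlast]
    exact TPlusAux.integral_ext hab.le gtop hν
  have hTG : ∀ x : Fin (2 * m - 1 + 1) → ℝ, StrictMono x → (∀ j, x j ∈ Set.Icc a b) →
      0 < (Matrix.of fun (i j : Fin (2 * m - 1 + 1)) => G (Fin.castSucc i) (x j)).det := by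
    intro x hx hxI
    have hmat : (Matrix.of fun (i j : Fin (2 * m - 1 + 1)) => G (Fin.castSucc i) (x j))
        = Matrix.of fun i j => g i (x j) := by
      ext i j
      simp only [Matrix.of_apply]
      rw [hGcast i]
      exact TPlusAux.ext_eq hab.le (g i) (hxI j)
    rw [hmat]
    exact hT x hx hxI
  have hT'G : ∀ x : Fin (2 * m - 1 + 2) → ℝ, StrictMono x → (∀ j, x j ∈ Set.Icc a b) →
      0 < (Matrix.of fun (i j : Fin (2 * m - 1 + 2)) => G i (x j)).det := by
    intro x hx hxI
    have hmat : (Matrix.of fun (i j : Fin (2 * m - 1 + 2)) => G i (x j))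
        = Matrix.of fun i j => (Fin.snoc (n := 2 * m - 1 + 1) (α := fun _ => ℝ → ℝ) g gtop i) (x j) := by
      ext i j
      simp only [Matrix.of_apply]
      exact TPlusAux.ext_eq hab.le (Fin.snoc (n := 2 * m - 1 + 1) (α := fun _ => ℝ → ℝ) g gtop i) (hxI j)
    rw [hmat]
    exact hT' x hx hxI
  have hpow : ∀ k : ℕ, ((-1 : ℝ)) ^ ((2 * m - 1 + 1) + k) = (-1 : ℝ) ^ k := by
    intro k
    rw [pow_add, show ((-1 : ℝ)) ^ (2 * m - 1 + 1) = 1 from Even.neg_one_pow ⟨m, by omega⟩,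
      one_mul]
  -- no m interior support points for the maximizer
  have hclaimA : ¬ ∃ s : Fin m → ℝ, StrictMono s ∧
      ∀ j, s j ∈ measSupport μmax ∩ Set.Ioo a b := by
    rintro ⟨s, hsmono, hsmem⟩
    obtain ⟨x, hxmono, hxI, hxodd⟩ :=
      TPlusAux.interleave_max hm hab s hsmono (fun j => (hsmem j).2)
    have hsupp : ∀ k : Fin (2 * m - 1 + 2),
        (1 : ℝ) * (-1 : ℝ) ^ ((2 * m - 1 + 1) + (k : ℕ)) < 0 → x k ∈ measSupport μmax := by
      intro k hk
      rw [one_mul, hpow] at hk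
      have hodd : Odd (k : ℕ) := by
        rcases Nat.even_or_odd (k : ℕ) with he | ho
        · rw [he.neg_one_pow] at hk; norm_num at hk
        · exact ho
      obtain ⟨j, hj⟩ := hxodd k hodd
      rw [hj]
      exact (hsmem j).1
    obtain ⟨ν, hνfin, hνn, hνmom, hνlt⟩ := TPlusAux.core hab G hGc hTG hT'G μmax hnmax
      x hxmono hxI 1 (Or.inl rfl) hsupp
    have hνMc : MemMc a b g c ν := by
      refine ⟨hνfin, hνn, fun i => ?_⟩
      have h1 := hνmom i
      rw [hGint ν hνn i, hGint μmax hnmax i] at h1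
      exact h1.trans (hmommax i)
    have h2 := hmax ν hνMc
    rw [one_mul, one_mul, hGtopint ν hνn, hGtopint μmax hnmax] at hνlt
    linarith
  -- no m+1 support points for the minimizer
  have hclaimB : ¬ ∃ s : Fin (m + 1) → ℝ, StrictMono s ∧
      ∀ j, s j ∈ measSupport μmin := by
    rintro ⟨s, hsmono, hsmem⟩
    obtain ⟨x, hxmono, hxI, hxeven⟩ := TPlusAux.interleave_min hm hab s hsmono
      (fun j => TPlusAux.measSupport_subset_Icc hnmin (hsmem j))
    have hsupp : ∀ k : Fin (2 * m - 1 + 2),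
        (-1 : ℝ) * (-1 : ℝ) ^ ((2 * m - 1 + 1) + (k : ℕ)) < 0 → x k ∈ measSupport μmin := by
      intro k hk
      rw [hpow] at hk
      have heven : Even (k : ℕ) := by
        rcases Nat.even_or_odd (k : ℕ) with he | ho
        · exact he
        · rw [ho.neg_one_pow] at hk; norm_num at hk
      obtain ⟨j, hj⟩ := hxeven k heven
      rw [hj]
      exact hsmem j
    obtain ⟨ν, hνfin, hνn, hνmom, hνlt⟩ := TPlusAux.core hab G hGc hTG hT'G μmin hnmin
      x hxmono hxI (-1) (Or.inr rfl) hsupp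
    have hνMc : MemMc a b g c ν := by
      refine ⟨hνfin, hνn, fun i => ?_⟩
      have h1 := hνmom i
      rw [hGint ν hνn i, hGint μmin hnmin i] at h1
      exact h1.trans (hmommin i)
    have h2 := hmin ν hνMc
    rw [hGtopint ν hνn, hGtopint μmin hnmin] at hνlt
    linarith
  -- build Xmax
  obtain ⟨Fmax, hFmaxsub, hFmaxcard⟩ :=
    (TPlusAux.finite_or_points (measSupport μmax ∩ Set.Ioo a b) m).resolve_right hclaimA
  set F0 : Finset ℝ := Fmax.filter (fun y => y ∈ Set.Icc a b) with hF0def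
  set base : Finset ℝ := insert a (insert b F0) with hbasedef
  have hbase_sub : ↑base ⊆ Set.Icc a b := by
    intro y hy
    simp only [hbasedef, Finset.coe_insert, Set.mem_insert_iff, Finset.mem_coe] at hy
    rcases hy with h | h | hy
    · rw [h]; exact ⟨le_refl a, hab.le⟩
    · rw [h]; exact ⟨hab.le, le_refl b⟩
    · exact (Finset.mem_filter.mp hy).2
  have hsupp_max : measSupport μmax ⊆ ↑base := by
    intro y hy
    have hyI := TPlusAux.measSupport_subset_Icc hnmax hy
    simp only [hbasedef, Finset.coe_insert, Set.mem_insert_iff, Finset.mem_coe]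
    by_cases hya : y = a
    · exact Or.inl hya
    · by_cases hyb : y = b
      · exact Or.inr (Or.inl hyb)
      · right; right
        have hyIoo : y ∈ Set.Ioo a b :=
          ⟨lt_of_le_of_ne hyI.1 (Ne.symm hya), lt_of_le_of_ne hyI.2 hyb⟩
        have : y ∈ (Fmax : Set ℝ) := hFmaxsub ⟨hy, hyIoo⟩
        exact Finset.mem_filter.mpr ⟨Finset.mem_coe.mp this, hyI⟩
  have hbase_card : base.card ≤ m + 1 := by
    have h1 : F0.card ≤ Fmax.card := Finset.card_filter_le _ _
    have h2 : base.card ≤ F0.card + 2 := by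
      rw [hbasedef]
      calc (insert a (insert b F0)).card ≤ (insert b F0).card + 1 := Finset.card_insert_le _ _
        _ ≤ F0.card + 1 + 1 := by linarith [Finset.card_insert_le b F0]
        _ = F0.card + 2 := by omega
    omega
  obtain ⟨Xmax, hbX, hXsub, hXcard⟩ := TPlusAux.pad hab base hbase_sub hbase_card
  -- build Xmin
  obtain ⟨Fmin, hFminsub, hFmincard⟩ :=
    (TPlusAux.finite_or_points (measSupport μmin) (m + 1)).resolve_right hclaimB
  set F1 : Finset ℝ := Fmin.filter (fun y => y ∈ Set.Icc a b) with hF1def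
  have hF1sub : ↑F1 ⊆ Set.Icc a b := by
    intro y hy
    exact (Finset.mem_filter.mp (Finset.mem_coe.mp hy)).2
  have hsupp_min : measSupport μmin ⊆ ↑F1 := by
    intro y hy
    have hyI := TPlusAux.measSupport_subset_Icc hnmin hy
    have : y ∈ (Fmin : Set ℝ) := hFminsub hy
    exact Finset.mem_coe.mpr (Finset.mem_filter.mpr ⟨Finset.mem_coe.mp this, hyI⟩)
  have hF1card : F1.card ≤ m := by
    rw [hF1def]
    have := Finset.card_filter_le Fmin (fun y => y ∈ Set.Icc a b)
    omega
  obtain ⟨Xmin, hbXmin, hXminsub, hXmincard⟩ := TPlusAux.pad hab F1 hF1sub hF1card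
  refine ⟨Xmax, Xmin, hXsub, hXminsub, ?_, ?_, hXcard, hXmincard, ?_, ?_⟩
  · exact hsupp_max.trans (Finset.coe_subset.mpr hbX)
  · exact hsupp_min.trans (Finset.coe_subset.mpr hbXmin)
  · exact hbX (by rw [hbasedef]; exact Finset.mem_insert_self a _)
  · exact hbX (by rw [hbasedef]; exact Finset.mem_insert_of_mem (Finset.mem_insert_self b F0))
end
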